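/- arXiv:1603.08779 — 2 statements merged into one kernel-verified Lean document; each statement's English description precedes it below -/
import Mathlib

section
/- Let T be a finite tree with at least three vertices. Then T has a unique dominating 2-packing containing all leaves of T if and only if T is a general corona of a tree. -/
open SimpleGraph

namespace GenCorona

universe u

/-- A vertex neighborhood partition of a graph `G`: for every vertex `v`, a partition
of the open neighborhood `N_G(v)` into nonempty sets. -/
structure NbhdPartition {V : Type u} (G : SimpleGraph V) where
  part : V → Set (Set V)
  nonempty : ∀ v : V, ∀ A ∈ part v, A.Nonempty
  subset_nbhd : ∀ v : V, ∀ A ∈ part v, A ⊆ G.neighborSet v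
  covers : ∀ v : V, ∀ u ∈ G.neighborSet v, ∃ A ∈ part v, u ∈ A
  eq_of_inter : ∀ v : V, ∀ A ∈ part v, ∀ B ∈ part v, (A ∩ B).Nonempty → A = B

variable {V : Type u}

/-- The vertex type of the general corona `G ∘ 𝒫`: external vertices `(v,1)` are encoded
as `Sum.inl v`, internal vertices `(v,A)` (with `A ∈ 𝒫(v)`) as `Sum.inr ⟨(v,A), _⟩`. -/
abbrev CoronaVert (G : SimpleGraph V) (P : NbhdPartition G) : Type u :=
  V ⊕ {p : V × Set V // p.2 ∈ P.part p.1}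

/-- The general corona `G ∘ 𝒫`. -/
def corona (G : SimpleGraph V) (P : NbhdPartition G) : SimpleGraph (CoronaVert G P) :=
  SimpleGraph.fromRel fun x y =>
    match x, y with
    | Sum.inl v, Sum.inr p => v = p.val.1
    | Sum.inr p, Sum.inr q =>
        G.Adj p.val.1 q.val.1 ∧ q.val.1 ∈ p.val.2 ∧ p.val.1 ∈ q.val.2
    | _, _ => False

/-- The set of external vertices of the general corona. -/
def Ext (G : SimpleGraph V) (P : NbhdPartition G) : Set (CoronaVert G P) :=
  Set.range Sum.inl

/-- A graph is a general corona of a tree if it is isomorphic to `T ∘ 𝒫` for some finite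
tree `T` and some vertex neighborhood partition `𝒫` of `T`. -/
def IsGeneralCoronaOfTree {W : Type*} (H : SimpleGraph W) : Prop :=
  ∃ (n : ℕ) (T : SimpleGraph (Fin n)) (P : NbhdPartition T),
    T.IsTree ∧ Nonempty (H ≃g corona T P)

/-- A graph `H` is a general corona of a tree with external vertex set `E`. -/
def IsGenCoronaWithExt {W : Type*} (H : SimpleGraph W) (E : Set W) : Prop :=
  ∃ (n : ℕ) (T : SimpleGraph (Fin n)) (P : NbhdPartition T),
    T.IsTree ∧ ∃ f : H ≃g corona T P, E = ⇑f ⁻¹' Ext T P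

/-- `D` is a dominating set of `G`. -/
def IsDominating (G : SimpleGraph V) (D : Set V) : Prop :=
  ∀ v ∉ D, ∃ u ∈ D, G.Adj v u

/-- `S` is a 2-packing of `G`: any two distinct vertices of `S` are at distance
greater than 2 (where the extended distance of unreachable vertices is `⊤`). -/
def Is2Packing (G : SimpleGraph V) (S : Set V) : Prop :=
  ∀ u ∈ S, ∀ v ∈ S, u ≠ v → 2 < G.edist u v

/-- A leaf is a vertex of degree 1, i.e. with exactly one neighbor. -/
def IsLeaf (G : SimpleGraph V) (v : V) : Prop :=
  (G.neighborSet v).ncard = 1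

/-- The domination number: the minimum size of a dominating set. -/
noncomputable def dominationNumber (G : SimpleGraph V) : ℕ :=
  sInf {n : ℕ | ∃ D : Set V, IsDominating G D ∧ D.ncard = n}

/-- The graph obtained from `G` by subdividing every edge in `F` (each once):
for each `e ∈ F` a new vertex `Sum.inr e` replaces the edge `e` by a path of length two. -/
def subdivide (G : SimpleGraph V) (F : Set (Sym2 V)) : SimpleGraph (V ⊕ F) :=
  SimpleGraph.fromRel fun x y =>
    match x, y with
    | Sum.inl u, Sum.inl v => G.Adj u v ∧ s(u, v) ∉ F
    | Sum.inl u, Sum.inr e => u ∈ e.val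
    | _, _ => False

/-- The domination subdivision number `sd(G)`: the minimum number of edges which must be
subdivided (each edge at most once) in order to increase the domination number. -/
noncomputable def sd (G : SimpleGraph V) : ℕ :=
  sInf {k : ℕ | ∃ F : Set (Sym2 V), F ⊆ G.edgeSet ∧ F.ncard = k ∧
    dominationNumber G < dominationNumber (subdivide G F)}

/-- The corona `G ∘ K₁`: attach one new pendant vertex `Sum.inr v` to each vertex
`Sum.inl v` of `G`. -/
def coronaK1 (G : SimpleGraph V) : SimpleGraph (V ⊕ V) :=
  SimpleGraph.fromRel fun x y =>
    match x, y with
    | Sum.inl u, Sum.inl w => G.Adj u w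
    | Sum.inl u, Sum.inr w => u = w
    | _, _ => False

/-- The 2-subdivision `S₂(G)`: every edge `uv` is replaced by a path `(u, x₁, x₂, v)`;
the new vertex `Sum.inr ⟨(u,v), _⟩` is the subdivision vertex adjacent to `u`. -/
def twoSubdivision (G : SimpleGraph V) : SimpleGraph (V ⊕ {p : V × V // G.Adj p.1 p.2}) :=
  SimpleGraph.fromRel fun x y =>
    match x, y with
    | Sum.inl u, Sum.inr p => u = p.val.1
    | Sum.inr p, Sum.inr q => p.val.1 = q.val.2 ∧ p.val.2 = q.val.1
    | _, _ => False

/-- `𝒫'` is a refinement of `𝒫`. -/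
def Refines {G : SimpleGraph V} (P' P : NbhdPartition G) : Prop :=
  ∀ v : V, ∀ A ∈ P'.part v, ∃ B ∈ P.part v, A ⊆ B

/-- The graph obtained by contracting the two vertices `x` and `y` of `G` to the single
vertex `x` (the vertex `y` is removed, and `x` becomes adjacent to all former
neighbors of `y`). -/
def contractPair {W : Type*} (G : SimpleGraph W) (x y : W) :
    SimpleGraph {w : W // w ≠ y} :=
  SimpleGraph.fromRel fun a b =>
    G.Adj a.val b.val ∨ (a.val = x ∧ G.Adj y b.val) ∨ (b.val = x ∧ G.Adj a.val y)

/-- The graph obtained from `G` by attaching a path `(x, y, z)` (encoded as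
`Sum.inr 0, Sum.inr 1, Sum.inr 2`) to the vertex `v` via the edge `v x`. -/
def attachPath3 {W : Type*} (G : SimpleGraph W) (v : W) : SimpleGraph (W ⊕ Fin 3) :=
  SimpleGraph.fromRel fun a b =>
    match a, b with
    | Sum.inl u, Sum.inl w => G.Adj u w
    | Sum.inl u, Sum.inr i => u = v ∧ i = 0
    | Sum.inr i, Sum.inr j => (i = 0 ∧ j = 1) ∨ (i = 1 ∧ j = 2)
    | _, _ => False

/-- The graph obtained from `G` by attaching a path `(x, y)` (encoded as
`Sum.inr 0, Sum.inr 1`) to the vertex `v` via the edge `v x`. -/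
def attachPath2 {W : Type*} (G : SimpleGraph W) (v : W) : SimpleGraph (W ⊕ Fin 2) :=
  SimpleGraph.fromRel fun a b =>
    match a, b with
    | Sum.inl u, Sum.inl w => G.Adj u w
    | Sum.inl u, Sum.inr i => u = v ∧ i = 0
    | Sum.inr i, Sum.inr j => i = 0 ∧ j = 1
    | _, _ => False

/-- The family `𝓕` of labeled trees; the label of a vertex is `A` when it belongs to the
distinguished set `L`, and `B` otherwise.  The family contains the labeled path `P₄`
(leaves labeled `A`, support vertices labeled `B`) and is closed under the two
attachment operations. -/
inductive LabF : ∀ {W : Type}, SimpleGraph W → Set W → Prop where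
  | base : LabF (SimpleGraph.pathGraph 4) ({0, 3} : Set (Fin 4))
  | opA {W : Type} {G : SimpleGraph W} {L : Set W} (v : W) :
      LabF G L → v ∈ L →
        LabF (attachPath3 G v) (Sum.inl '' L ∪ {Sum.inr (2 : Fin 3)})
  | opB {W : Type} {G : SimpleGraph W} {L : Set W} (v : W) :
      LabF G L → v ∉ L →
        LabF (attachPath2 G v) (Sum.inl '' L ∪ {Sum.inr (1 : Fin 2)})

/-- A tree `T` belongs to the family `𝓕` if it admits a labeling constructed by the
above rules, i.e. it is isomorphic to a member of the inductively generated family. -/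
def MemF {W : Type*} (T : SimpleGraph W) : Prop :=
  ∃ (W' : Type) (G : SimpleGraph W') (L : Set W'), LabF G L ∧ Nonempty (T ≃g G)

open SimpleGraph.Walk

lemma edist_le_two {T : SimpleGraph V} {x a y : V} (h1 : T.Adj x a) (h2 : T.Adj a y) :
    T.edist x y ≤ 2 := by
  have := edist_le (Walk.cons h1 h2.toWalk)
  simpa using this

lemma edist_le_three {T : SimpleGraph V} {x a b y : V} (h1 : T.Adj x a) (h2 : T.Adj a b)
    (h3 : T.Adj b y) : T.edist x y ≤ 3 := by
  have := edist_le (Walk.cons h1 (Walk.cons h2 h3.toWalk))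
  simpa using this

lemma packing_not_adj {T : SimpleGraph V} {C : Set V} (hp : Is2Packing T C) {x y : V}
    (hx : x ∈ C) (hy : y ∈ C) (h : T.Adj x y) : False := by
  have h1 := hp x hx y hy h.ne
  rw [edist_eq_one_iff_adj.mpr h] at h1
  norm_num at h1

lemma packing_not_dist2 {T : SimpleGraph V} {C : Set V} (hp : Is2Packing T C) {x y a : V}
    (hx : x ∈ C) (hy : y ∈ C) (hne : x ≠ y) (hxa : T.Adj x a) (hay : T.Adj a y) : False := by
  have h1 := hp x hx y hy hne
  have h2 := edist_le_two hxa hay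
  exact absurd (h1.trans_le h2) (by norm_num)

lemma walk_three {T : SimpleGraph V} {u v : V} (p : T.Walk u v) (hl : p.length = 3) :
    ∃ a b, T.Adj u a ∧ T.Adj a b ∧ T.Adj b v := by
  cases p with
  | nil => simp at hl
  | cons h1 q =>
    cases q with
    | nil => simp at hl
    | cons h2 r =>
      cases r with
      | nil => simp at hl
      | cons h3 s2 =>
        cases s2 with
        | nil => exact ⟨_, _, h1, h2, h3⟩
        | cons h4 t => simp [Walk.length_cons] at hl

lemma walk_two {T : SimpleGraph V} {u v : V} (p : T.Walk u v) (hl : p.length = 2) :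
    ∃ a, T.Adj u a ∧ T.Adj a v := by
  cases p with
  | nil => simp at hl
  | cons h1 q =>
    cases q with
    | nil => simp at hl
    | cons h2 r =>
      cases r with
      | nil => exact ⟨_, h1, h2⟩
      | cons h3 t => simp [Walk.length_cons] at hl

lemma edist_three_exists {T : SimpleGraph V} {u v : V} (h : T.edist u v = 3) :
    ∃ a b, T.Adj u a ∧ T.Adj a b ∧ T.Adj b v := by
  obtain ⟨p, hp⟩ := exists_walk_of_edist_eq_coe (k := 3) (by exact_mod_cast h)
  exact walk_three p hp

lemma edist_two_exists {T : SimpleGraph V} {u v : V} (h : T.edist u v = 2) :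
    ∃ a, T.Adj u a ∧ T.Adj a v := by
  obtain ⟨p, hp⟩ := exists_walk_of_edist_eq_coe (k := 2) (by exact_mod_cast h)
  exact walk_two p hp

lemma enat_eq_three {x : ℕ∞} (h1 : 2 < x) (h2 : x ≤ 3) : x = 3 := by
  lift x to ℕ using ne_top_of_le_ne_top (by simp) h2
  have h1' : (2:ℕ) < x := by exact_mod_cast h1
  have h2' : x ≤ (3:ℕ) := by exact_mod_cast h2
  exact_mod_cast (by omega : x = 3)

lemma enat_eq_two {x : ℕ∞} (h2 : x ≤ 2) (h0 : x ≠ 0) (h1 : x ≠ 1) : x = 2 := by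
  lift x to ℕ using ne_top_of_le_ne_top (by simp) h2
  have h0' : (x : ℕ) ≠ 0 := by exact_mod_cast h0
  have h1' : (x : ℕ) ≠ 1 := by exact_mod_cast h1
  have h2' : (x : ℕ) ≤ 2 := by exact_mod_cast h2
  exact_mod_cast (by omega : (x:ℕ) = 2)

lemma adj_toWalk_isPath {T : SimpleGraph V} {u v : V} (h : T.Adj u v) : h.toWalk.IsPath := by
  simp [Walk.isPath_def, h.ne]

lemma no_triangle {T : SimpleGraph V} (hT : T.IsTree) {a b c : V}
    (hab : T.Adj a b) (hbc : T.Adj b c) (hca : T.Adj c a) : False := by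
  have hp1 : (hca.symm.toWalk).IsPath := adj_toWalk_isPath _
  have hp2 : (Walk.cons hab hbc.toWalk).IsPath := by
    simp [Walk.isPath_def, hab.ne, hbc.ne, hca.ne']
  have h := hT.IsAcyclic.path_unique ⟨_, hp1⟩ ⟨_, hp2⟩
  rw [Subtype.mk.injEq] at h
  have := congrArg Walk.length h
  simp at this

lemma path3_unique {T : SimpleGraph V} (hT : T.IsTree) {s u a1 a2 b1 b2 : V}
    (ha1 : T.Adj s a1) (ha2 : T.Adj a1 a2) (ha3 : T.Adj a2 u)
    (hb1 : T.Adj s b1) (hb2 : T.Adj b1 b2) (hb3 : T.Adj b2 u)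
    (hsu : s ≠ u) (hsa2 : s ≠ a2) (hsb2 : s ≠ b2) (ha1u : a1 ≠ u) (hb1u : b1 ≠ u) :
    a1 = b1 ∧ a2 = b2 := by
  have hp1 : (Walk.cons ha1 (Walk.cons ha2 ha3.toWalk)).IsPath := by
    simp [Walk.isPath_def, ha1.ne, ha2.ne, ha3.ne, hsa2, hsu, ha1u]
  have hp2 : (Walk.cons hb1 (Walk.cons hb2 hb3.toWalk)).IsPath := by
    simp [Walk.isPath_def, hb1.ne, hb2.ne, hb3.ne, hsb2, hsu, hb1u]
  have h := hT.IsAcyclic.path_unique ⟨_, hp1⟩ ⟨_, hp2⟩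
  rw [Subtype.mk.injEq] at h
  have h2 := congrArg Walk.support h
  simp [Walk.support_cons] at h2
  exact h2


open SimpleGraph.Walk

/-- In a tree, every path is a shortest path. -/
lemma path_length_eq_dist {T : SimpleGraph V} (hT : T.IsTree) {u v : V}
    {p : T.Walk u v} (hp : p.IsPath) : p.length = T.dist u v := by
  obtain ⟨q, hq, hql⟩ := hT.isConnected.exists_path_of_dist u v
  have h := hT.IsAcyclic.path_unique ⟨p, hp⟩ ⟨q, hq⟩
  rw [Subtype.mk.injEq] at h
  rw [h, hql]

lemma dist_add_of_mem {T : SimpleGraph V} (hT : T.Connected) {r u v : V}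
    (p : T.Walk r u) (hlen : p.length = T.dist r u) (hv : v ∈ p.support) :
    T.dist r v + T.dist v u = T.dist r u := by
  haveI := Classical.decEq V
  have h1 : T.dist r v ≤ (p.takeUntil v hv).length := dist_le _
  have h2 : T.dist v u ≤ (p.dropUntil v hv).length := dist_le _
  have h3 : (p.takeUntil v hv).length + (p.dropUntil v hv).length = p.length := by
    rw [← Walk.length_append, Walk.take_spec]
  have h4 := hT.dist_triangle (u := r) (v := v) (w := u)
  omega

lemma dist_le_of_mem {T : SimpleGraph V} {r u v : V}
    (p : T.Walk r u) (hv : v ∈ p.support) : T.dist r v ≤ p.length := by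
  haveI := Classical.decEq V
  have h1 : T.dist r v ≤ (p.takeUntil v hv).length := dist_le _
  have := Walk.length_takeUntil_le p hv
  omega

lemma concat_isPath {T : SimpleGraph V} {u v w : V} {p : T.Walk u v}
    (hp : p.IsPath) (h : T.Adj v w) (hw : w ∉ p.support) : (p.concat h).IsPath := by
  rw [← Walk.isPath_reverse_iff, Walk.reverse_concat, Walk.cons_isPath_iff]
  exact ⟨hp.reverse, by simpa using hw⟩

/-- In a tree, adjacent vertices have distances from `r` differing by exactly one. -/
lemma adj_dist_cases {T : SimpleGraph V} (hT : T.IsTree) {r u v : V} (h : T.Adj u v) :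
    T.dist r v = T.dist r u + 1 ∨ T.dist r u = T.dist r v + 1 := by
  obtain ⟨p, hp, hl⟩ := hT.isConnected.exists_path_of_dist r u
  by_cases hv : v ∈ p.support
  · right
    have hdecomp := dist_add_of_mem hT.isConnected p hl hv
    have h1 : T.dist v u = 1 := dist_eq_one_iff_adj.mpr h.symm
    omega
  · left
    have hq : (p.concat h).IsPath := concat_isPath hp h hv
    have h2 := path_length_eq_dist hT hq
    rw [Walk.length_concat] at h2
    omega

/-- In a tree, a vertex has at most one neighbor closer to the root. -/
lemma parent_unique {T : SimpleGraph V} (hT : T.IsTree) {r x u v : V}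
    (hu : T.Adj u x) (hv : T.Adj v x)
    (hdu : T.dist r u + 1 = T.dist r x) (hdv : T.dist r v + 1 = T.dist r x) : u = v := by
  obtain ⟨p1, hp1, hl1⟩ := hT.isConnected.exists_path_of_dist r u
  obtain ⟨p2, hp2, hl2⟩ := hT.isConnected.exists_path_of_dist r v
  have hx1 : x ∉ p1.support := by
    intro hx
    have := dist_le_of_mem p1 hx
    omega
  have hx2 : x ∉ p2.support := by
    intro hx
    have := dist_le_of_mem p2 hx
    omega
  have hq1 : (p1.concat hu).IsPath := concat_isPath hp1 hu hx1
  have hq2 : (p2.concat hv).IsPath := concat_isPath hp2 hv hx2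
  have heq := hT.IsAcyclic.path_unique ⟨p1.concat hu, hq1⟩ ⟨p2.concat hv, hq2⟩
  rw [Subtype.mk.injEq] at heq
  have := congrArg Walk.reverse heq
  rw [Walk.reverse_concat, Walk.reverse_concat] at this
  injection this with h1 h2



lemma exists_other_neighbor {T : SimpleGraph V} [Fintype V] {x y : V}
    (h : ¬ IsLeaf T x) (hy : T.Adj x y) : ∃ c, T.Adj x c ∧ c ≠ y := by
  by_contra hc
  push_neg at hc
  apply h
  have : T.neighborSet x = {y} := by
    ext z
    constructor
    · intro hz
      have := hc z hz
      simp [this]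
    · intro hz
      simp at hz
      subst hz
      exact hy
  rw [IsLeaf, this, Set.ncard_singleton]

lemma packing_unique_aux [Fintype V] {T : SimpleGraph V} (hT : T.IsTree) (r : V)
    {C1 C2 : Set V}
    (hd2 : IsDominating T C2) (hp1 : Is2Packing T C1) (hp2 : Is2Packing T C2)
    (hl2 : ∀ v, IsLeaf T v → v ∈ C2) {x : V} (hx1 : x ∈ C1) (hx2 : x ∉ C2)
    (hmax : ∀ z, (z ∈ C1 ∧ z ∉ C2) ∨ (z ∈ C2 ∧ z ∉ C1) → T.dist r z ≤ T.dist r x) :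
    False := by
  -- x is not a leaf
  have hxleaf : ¬ IsLeaf T x := fun h => hx2 (hl2 x h)
  -- y : the C2-dominator of x
  obtain ⟨y, hy2, hxy⟩ := hd2 x hx2
  have hy1 : y ∉ C1 := fun hy1 => packing_not_adj hp1 hx1 hy1 hxy
  have hymax : T.dist r y ≤ T.dist r x := hmax y (Or.inr ⟨hy2, hy1⟩)
  have hydep : T.dist r y + 1 = T.dist r x := by
    rcases adj_dist_cases hT (r := r) hxy with h | h <;> omega
  -- c : a second neighbor of x
  obtain ⟨c, hxc, hcy⟩ := exists_other_neighbor hxleaf hxy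
  have hc1 : c ∉ C1 := fun hc1 => packing_not_adj hp1 hx1 hc1 hxc
  have hc2 : c ∉ C2 := fun hc2 => packing_not_dist2 hp2 hc2 hy2 hcy hxc.symm hxy
  -- depth of c is depth x + 1
  have hcdep : T.dist r c = T.dist r x + 1 := by
    rcases adj_dist_cases hT (r := r) hxc with h | h
    · exact h
    · exfalso
      exact hcy (parent_unique hT hxc.symm hxy.symm (by omega) hydep)
  -- z : the C2-dominator of c
  obtain ⟨z, hz2, hcz⟩ := hd2 c hc2
  have hzx : z ≠ x := fun h => hx2 (h ▸ hz2)
  have hz1 : z ∉ C1 := fun hz1 =>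
    packing_not_dist2 hp1 hx1 hz1 hzx.symm hxc hcz
  have hzmax : T.dist r z ≤ T.dist r x := hmax z (Or.inr ⟨hz2, hz1⟩)
  have hzdep : T.dist r z + 1 = T.dist r c := by
    rcases adj_dist_cases hT (r := r) hcz with h | h <;> omega
  exact hzx (parent_unique hT (r := r) hcz.symm hxc (by omega) (by omega))

theorem packing_unique [Fintype V] {T : SimpleGraph V} (hT : T.IsTree)
    {C1 C2 : Set V}
    (hd1 : IsDominating T C1) (hp1 : Is2Packing T C1) (hl1 : ∀ v, IsLeaf T v → v ∈ C1)
    (hd2 : IsDominating T C2) (hp2 : Is2Packing T C2) (hl2 : ∀ v, IsLeaf T v → v ∈ C2) :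
    C1 = C2 := by
  by_contra hne
  have hex : ∃ z, (z ∈ C1 ∧ z ∉ C2) ∨ (z ∈ C2 ∧ z ∉ C1) := by
    by_contra hex
    push_neg at hex
    exact hne (Set.ext fun z => by have := hex z; tauto)
  obtain ⟨z0, hz0⟩ := hex
  set D : Set V := {z | (z ∈ C1 ∧ z ∉ C2) ∨ (z ∈ C2 ∧ z ∉ C1)} with hD
  have hDfin : D.Finite := Set.toFinite D
  obtain ⟨x, hxD, hxmax⟩ := Set.Finite.exists_maximalFor (fun z => T.dist z0 z) D hDfin ⟨z0, hz0⟩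
  have hmax : ∀ z, (z ∈ C1 ∧ z ∉ C2) ∨ (z ∈ C2 ∧ z ∉ C1) → T.dist z0 z ≤ T.dist z0 x := by
    intro z hz
    by_contra hlt
    push_neg at hlt
    have : T.dist z0 z ≤ T.dist z0 x := hxmax (j := z) hz (le_of_lt hlt)
    omega
  rcases hxD with ⟨hx1, hx2⟩ | ⟨hx2, hx1⟩
  · exact packing_unique_aux hT z0 hd2 hp1 hp2 hl2 hx1 hx2 hmax
  · exact packing_unique_aux hT z0 hd1 hp2 hp1 hl1 hx2 hx1
      (fun z hz => hmax z (by tauto))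

open Sum

lemma corona_adj_inl_inl {G : SimpleGraph V} {P : NbhdPartition G} {u v : V} :
    ¬ (corona G P).Adj (inl u) (inl v) := by
  simp [corona, fromRel_adj]

lemma corona_adj_inl_inr {G : SimpleGraph V} {P : NbhdPartition G} {v : V}
    {p : {p : V × Set V // p.2 ∈ P.part p.1}} :
    (corona G P).Adj (inl v) (inr p) ↔ v = p.val.1 := by
  simp only [corona, fromRel_adj]
  constructor
  · rintro ⟨-, h | h⟩
    · exact h
    · exact absurd h (by simp)
  · intro h
    exact ⟨by simp, Or.inl h⟩

lemma corona_adj_inr_inl {G : SimpleGraph V} {P : NbhdPartition G} {v : V}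
    {p : {p : V × Set V // p.2 ∈ P.part p.1}} :
    (corona G P).Adj (inr p) (inl v) ↔ v = p.val.1 := by
  rw [(corona G P).adj_comm]
  exact corona_adj_inl_inr

lemma corona_adj_inr_inr {G : SimpleGraph V} {P : NbhdPartition G}
    {p q : {p : V × Set V // p.2 ∈ P.part p.1}} :
    (corona G P).Adj (inr p) (inr q) ↔
      p ≠ q ∧ G.Adj p.val.1 q.val.1 ∧ q.val.1 ∈ p.val.2 ∧ p.val.1 ∈ q.val.2 := by
  simp only [corona, fromRel_adj]
  constructor
  · rintro ⟨hne, h | h⟩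
    · exact ⟨fun he => hne (congrArg inr he), h⟩
    · exact ⟨fun he => hne (congrArg inr he), h.1.symm, h.2.2, h.2.1⟩
  · rintro ⟨hne, h⟩
    exact ⟨by simpa using hne, Or.inl h⟩

lemma ext_dominating {G : SimpleGraph V} (P : NbhdPartition G) :
    IsDominating (corona G P) (Ext G P) := by
  rintro (v | p) hv
  · exact absurd ⟨v, rfl⟩ hv
  · exact ⟨inl p.val.1, ⟨p.val.1, rfl⟩, corona_adj_inr_inl.mpr rfl⟩

lemma ext_packing {G : SimpleGraph V} (P : NbhdPartition G) :
    Is2Packing (corona G P) (Ext G P) := by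
  rintro u ⟨a, rfl⟩ v ⟨b, rfl⟩ hne
  by_contra hle
  push_neg at hle
  have h0 : (corona G P).edist (inl a) (inl b) ≠ 0 := by
    rw [Ne, edist_eq_zero_iff]
    simpa using hne
  by_cases h1 : (corona G P).edist (inl a) (inl b) = 1
  · exact corona_adj_inl_inl (edist_eq_one_iff_adj.mp h1)
  · have h2 := enat_eq_two hle h0 h1
    obtain ⟨w, hw1, hw2⟩ := edist_two_exists h2
    cases w with
    | inl w => exact corona_adj_inl_inl hw1
    | inr p =>
      have e1 := corona_adj_inl_inr.mp hw1
      have e2 := corona_adj_inr_inl.mp hw2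
      exact hne (by rw [e1, e2])

lemma leaf_mem_ext {G : SimpleGraph V} {P : NbhdPartition G}
    {x : CoronaVert G P} (h : IsLeaf (corona G P) x) : x ∈ Ext G P := by
  cases x with
  | inl v => exact ⟨v, rfl⟩
  | inr p =>
    exfalso
    obtain ⟨u, hu⟩ := P.nonempty p.val.1 p.val.2 p.2
    have huN : u ∈ G.neighborSet p.val.1 := P.subset_nbhd p.val.1 p.val.2 p.2 hu
    have hadj : G.Adj p.val.1 u := huN
    obtain ⟨B, hB, hvB⟩ := P.covers u p.val.1 (by simpa [G.adj_comm] using hadj)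
    set q : {p : V × Set V // p.2 ∈ P.part p.1} := ⟨(u, B), hB⟩ with hq
    have h1 : (corona G P).Adj (inr p) (inl p.val.1) := corona_adj_inr_inl.mpr rfl
    have h2 : (corona G P).Adj (inr p) (inr q) := by
      rw [corona_adj_inr_inr]
      refine ⟨?_, hadj, hu, hvB⟩
      intro he
      have : p.val.1 = u := by rw [he]
      exact hadj.ne this
    obtain ⟨a, ha⟩ := Set.ncard_eq_one.mp h
    have e1 : inl p.val.1 = a := by
      have : (inl p.val.1 : CoronaVert G P) ∈ ({a} : Set (CoronaVert G P)) := ha ▸ (show (inl p.val.1 : CoronaVert G P) ∈ (corona G P).neighborSet (inr p) from h1)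
      simpa using this
    have e2 : (inr q : CoronaVert G P) = a := by
      have : (inr q : CoronaVert G P) ∈ ({a} : Set (CoronaVert G P)) := ha ▸ (show (inr q : CoronaVert G P) ∈ (corona G P).neighborSet (inr p) from h2)
      simpa using this
    rw [← e2] at e1
    simp at e1

section IsoTransport
variable {W W' : Type*} {H : SimpleGraph W} {H' : SimpleGraph W'}

lemma iso_edist_le (f : H ≃g H') (u v : W) : H'.edist (f u) (f v) ≤ H.edist u v := by
  rcases eq_or_ne (H.edist u v) ⊤ with h | h
  · rw [h]; exact le_top
  · obtain ⟨p, hp⟩ := exists_walk_of_edist_ne_top h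
    calc H'.edist (f u) (f v) ≤ (p.map f.toHom).length := edist_le _
    _ = p.length := by rw [Walk.length_map]
    _ = H.edist u v := hp

lemma iso_edist (f : H ≃g H') (u v : W) : H'.edist (f u) (f v) = H.edist u v := by
  refine le_antisymm (iso_edist_le f u v) ?_
  have := iso_edist_le f.symm (f u) (f v)
  simpa using this

lemma iso_neighborSet (f : H ≃g H') (v : W) :
    H'.neighborSet (f v) = f '' H.neighborSet v := by
  ext w
  constructor
  · intro hw
    refine ⟨f.symm w, ?_, by simp⟩
    have : H'.Adj (f v) (f (f.symm w)) := by simpa using hw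
    exact f.map_adj_iff.mp this
  · rintro ⟨z, hz, rfl⟩
    exact f.map_adj_iff.mpr hz

lemma iso_isLeaf (f : H ≃g H') {v : W} (h : IsLeaf H v) : IsLeaf H' (f v) := by
  rw [IsLeaf, iso_neighborSet f v, Set.ncard_image_of_injective _ f.injective]
  exact h

end IsoTransport

theorem corona_to_unique [Fintype V] {T : SimpleGraph V} (hT : T.IsTree)
    (h : IsGeneralCoronaOfTree T) :
    ∃! S : Set V, IsDominating T S ∧ Is2Packing T S ∧ ∀ v : V, IsLeaf T v → v ∈ S := by
  obtain ⟨n, T', P, hT', ⟨f⟩⟩ := h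
  set S := ⇑f ⁻¹' Ext T' P with hS
  have hd : IsDominating T S := by
    intro v hv
    obtain ⟨u', hu', hadj⟩ := ext_dominating P (f v) hv
    refine ⟨f.symm u', ?_, ?_⟩
    · simp only [hS, Set.mem_preimage, RelIso.apply_symm_apply]
      exact hu'
    · have h2 : (corona T' P).Adj (f v) (f (f.symm u')) := by simpa using hadj
      exact f.map_adj_iff.mp h2
  have hp : Is2Packing T S := by
    intro u hu v hv hne
    rw [← iso_edist f u v]
    exact ext_packing P (f u) hu (f v) hv (fun he => hne (f.injective he))
  have hl : ∀ v, IsLeaf T v → v ∈ S := fun v hv => leaf_mem_ext (iso_isLeaf f hv)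
  refine ⟨S, ⟨hd, hp, hl⟩, ?_⟩
  rintro S' ⟨hd', hp', hl'⟩
  exact packing_unique hT hd' hp' hl' hd hp hl

/-! ### Forward direction: construction of the corona structure -/

section Forward

variable {T : SimpleGraph V} {S : Set V}

/-- The tree on the code vertices: two code vertices are adjacent iff at distance 3. -/
def codeGraph (T : SimpleGraph V) (S : Set V) {n : ℕ} (e : Fin n ≃ S) :
    SimpleGraph (Fin n) where
  Adj i j := T.edist (e i : V) (e j : V) = 3
  symm := ⟨fun i j h => by rwa [edist_comm] at h⟩
  loopless := ⟨fun i h => by rw [SimpleGraph.edist_self] at h; simp at h⟩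

lemma codeGraph_adj {n : ℕ} {e : Fin n ≃ S} {i j : Fin n} :
    (codeGraph T S e).Adj i j ↔ T.edist (e i : V) (e j : V) = 3 := Iff.rfl

/-- The part of the neighborhood partition corresponding to an internal vertex `w`. -/
def codeNbhd (T : SimpleGraph V) (w : V) {n : ℕ} (e : Fin n ≃ S) : Set (Fin n) :=
  {j | T.edist w (e j : V) = 2}

section Basic

lemma adj_S_notS (hpack : Is2Packing T S) {s w : V} (hs : s ∈ S) (h : T.Adj s w) : w ∉ S :=
  fun hw => packing_not_adj hpack hs hw h

lemma dominator_unique (hpack : Is2Packing T S) {s1 s2 w : V} (hs1 : s1 ∈ S) (hs2 : s2 ∈ S)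
    (h1 : T.Adj w s1) (h2 : T.Adj w s2) : s1 = s2 := by
  by_contra hne
  exact packing_not_dist2 hpack hs1 hs2 hne h1.symm h2

/-- Decoding an adjacency of the code graph into a path of length 3. -/
lemma adj_decode (hpack : Is2Packing T S) {s u : V} (hs : s ∈ S) (hu : u ∈ S) (h : T.edist s u = 3) :
    ∃ a b, T.Adj s a ∧ T.Adj a b ∧ T.Adj b u ∧ a ∉ S ∧ b ∉ S ∧
      T.edist a u = 2 ∧ T.edist s b = 2 := by
  obtain ⟨a, b, h1, h2, h3⟩ := edist_three_exists h
  have hsu : s ≠ u := by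
    intro he
    rw [he, edist_self] at h
    simp at h
  have haS : a ∉ S := adj_S_notS hpack hs h1
  have hbS : b ∉ S := adj_S_notS hpack hu h3.symm
  have hau : T.edist a u = 2 := by
    refine enat_eq_two (edist_le_two h2 h3) ?_ ?_
    · rw [Ne, edist_eq_zero_iff]
      exact fun he => haS (he ▸ hu)
    · rw [Ne, edist_eq_one_iff_adj]
      exact fun hadj => hsu (dominator_unique hpack hs hu h1.symm hadj)
  have hsb : T.edist s b = 2 := by
    refine enat_eq_two (edist_le_two h1 h2) ?_ ?_
    · rw [Ne, edist_eq_zero_iff]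
      exact fun he => hbS (he.symm ▸ hs)
    · rw [Ne, edist_eq_one_iff_adj]
      exact fun hadj => hsu (dominator_unique hpack hs hu hadj.symm h3)
  exact ⟨a, b, h1, h2, h3, haS, hbS, hau, hsb⟩

/-- Decoding membership in a part. -/
lemma mem_code_decode (hpack : Is2Packing T S) {s u w : V} (hu : u ∈ S) (hs : s ∈ S) (hsw : T.Adj s w)
    (h2 : T.edist w u = 2) :
    ∃ a, T.Adj w a ∧ T.Adj a u ∧ a ∉ S ∧ s ≠ u ∧ T.edist s u = 3 := by
  obtain ⟨a, ha1, ha2⟩ := edist_two_exists h2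
  have haS : a ∉ S := adj_S_notS hpack hu ha2.symm
  have hsu : s ≠ u := by
    intro he
    subst he
    rw [edist_comm, edist_eq_one_iff_adj.mpr hsw] at h2
    · simp at h2
  have h3 : T.edist s u = 3 :=
    enat_eq_three (hpack s hs u hu hsu) (edist_le_three hsw ha1 ha2)
  exact ⟨a, ha1, ha2, haS, hsu, h3⟩

/-- Uniqueness of the middle path between two code vertices. -/
lemma mid_unique (hT : T.IsTree) (hpack : Is2Packing T S) {s u a1 a2 b1 b2 : V} (hs : s ∈ S) (hu : u ∈ S) (hsu : s ≠ u)
    (ha1 : T.Adj s a1) (ha2 : T.Adj a1 a2) (ha3 : T.Adj a2 u)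
    (hb1 : T.Adj s b1) (hb2 : T.Adj b1 b2) (hb3 : T.Adj b2 u)
    (na1 : a1 ∉ S) (na2 : a2 ∉ S) (nb1 : b1 ∉ S) (nb2 : b2 ∉ S) :
    a1 = b1 ∧ a2 = b2 :=
  path3_unique hT ha1 ha2 ha3 hb1 hb2 hb3 hsu
    (fun h => na2 (h ▸ hs)) (fun h => nb2 (h ▸ hs))
    (fun h => na1 (h ▸ hu)) (fun h => nb1 (h ▸ hu))

/-- The parts are nonempty. -/
lemma codeNbhd_nonempty [Fintype V] (hT : T.IsTree) (hdom : IsDominating T S)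
    (hpack : Is2Packing T S) (hleaf : ∀ v : V, IsLeaf T v → v ∈ S) {n : ℕ} (e : Fin n ≃ S) {s w : V} (hs : s ∈ S) (hw : w ∉ S)
    (hsw : T.Adj s w) : ∃ j : Fin n, T.edist w (e j : V) = 2 := by
  have hwleaf : ¬ IsLeaf T w := fun h => hw (hleaf w h)
  obtain ⟨w', hww', hw's⟩ := exists_other_neighbor hwleaf hsw.symm
  have hw'S : w' ∉ S := by
    intro hw'S
    exact hw's (dominator_unique hpack hw'S hs hww' hsw.symm)
  obtain ⟨u, hu, hw'u⟩ := hdom w' hw'S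
  have h2 : T.edist w u = 2 := by
    refine enat_eq_two (edist_le_two hww' hw'u) ?_ ?_
    · rw [Ne, edist_eq_zero_iff]
      exact fun he => hw (he ▸ hu)
    · rw [Ne, edist_eq_one_iff_adj]
      intro hadj
      have he : u = s := dominator_unique hpack hu hs hadj hsw.symm
      subst he
      exact no_triangle hT hsw hww' hw'u
  refine ⟨e.symm ⟨u, hu⟩, ?_⟩
  rwa [e.apply_symm_apply]

end Basic

lemma e_val_inj {n : ℕ} (e : Fin n ≃ S) {k i : Fin n} (h : (e k : V) = (e i : V)) : k = i :=
  e.injective (Subtype.coe_injective h)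

/-- The vertex neighborhood partition of the code graph. -/
def codePart [Fintype V] (hT : T.IsTree) (hdom : IsDominating T S)
    (hpack : Is2Packing T S) (hleaf : ∀ v : V, IsLeaf T v → v ∈ S)
    {n : ℕ} (e : Fin n ≃ S) : NbhdPartition (codeGraph T S e) where
  part i := {A | ∃ w, w ∉ S ∧ T.Adj (e i : V) w ∧ A = codeNbhd T w e}
  nonempty := by
    rintro i A ⟨w, hw, hsw, rfl⟩
    obtain ⟨j, hj⟩ := codeNbhd_nonempty hT hdom hpack hleaf e (e i).2 hw hsw
    exact ⟨j, hj⟩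
  subset_nbhd := by
    rintro i A ⟨w, hw, hsw, rfl⟩ j hj
    obtain ⟨a, ha1, ha2, haS, hsu, h3⟩ := mem_code_decode hpack (e j).2 (e i).2 hsw hj
    exact h3
  covers := by
    intro i j hj
    obtain ⟨a, b, h1, h2, h3, haS, hbS, hau, hsb⟩ :=
      adj_decode hpack (e i).2 (e j).2 (codeGraph_adj.mp hj)
    exact ⟨codeNbhd T a e, ⟨a, haS, h1, rfl⟩, hau⟩
  eq_of_inter := by
    rintro i A ⟨w, hw, hsw, rfl⟩ B ⟨x, hx, hsx, rfl⟩ ⟨j, hjA, hjB⟩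
    obtain ⟨a, ha1, ha2, haS, hsu, h3⟩ := mem_code_decode hpack (e j).2 (e i).2 hsw hjA
    obtain ⟨b, hb1, hb2, hbS, -, -⟩ := mem_code_decode hpack (e j).2 (e i).2 hsx hjB
    have hh := mid_unique hT hpack (e i).2 (e j).2 hsu hsw ha1 ha2 hsx hb1 hb2 hw haS hx hbS
    rw [hh.1]

lemma code_connected [Fintype V] (hT : T.IsTree) (hdom : IsDominating T S)
    (hpack : Is2Packing T S) (hS : S.Nonempty) {n : ℕ} (e : Fin n ≃ S) :
    (codeGraph T S e).Connected := by
  have key : ∀ (d : ℕ) (u v : V) (hu : u ∈ S) (hv : v ∈ S), T.dist u v ≤ d →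
      (codeGraph T S e).Reachable (e.symm ⟨u, hu⟩) (e.symm ⟨v, hv⟩) := by
    intro d
    induction d with
    | zero =>
      intro u v hu hv hle
      have h0 : T.dist u v = 0 := Nat.le_zero.mp hle
      have : u = v := (hT.isConnected.dist_eq_zero_iff).mp h0
      subst this
      rfl
    | succ d ih =>
      intro u v hu hv hle
      by_cases h0 : T.dist u v ≤ d
      · exact ih u v hu hv h0
      have hk : T.dist u v = d + 1 := by omega
      obtain ⟨p, hplen⟩ := hT.isConnected.exists_walk_length_eq_dist u v
      have hpath : p.IsPath := p.isPath_of_length_eq_dist hplen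
      cases p with
      | nil => exact Reachable.refl _
      | cons h1 q =>
        rename_i p1
        cases q with
        | nil =>
          exfalso
          exact packing_not_adj hpack hu hv h1
        | cons h2 r =>
          rename_i p2
          have hulen : r.length + 2 = d + 1 := by
            have := hplen
            simp [Walk.length_cons] at this
            omega
          -- u ≠ p2
          have hup2 : u ≠ p2 := by
            rw [Walk.cons_isPath_iff] at hpath
            intro he
            apply hpath.2
            rw [he, Walk.support_cons]
            exact List.mem_cons_of_mem _ r.start_mem_support
          have hp1S : p1 ∉ S := adj_S_notS hpack hu h1
          have hp2S : p2 ∉ S := fun hp2 =>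
            hup2 (dominator_unique hpack hu hp2 h1.symm h2)
          obtain ⟨s', hs', hp2s'⟩ := hdom p2 hp2S
          have hus' : u ≠ s' := by
            intro he
            subst he
            exact no_triangle hT h1 h2 hp2s'
          have hedist : T.edist u s' = 3 :=
            enat_eq_three (hpack u hu s' hs' hus') (edist_le_three h1 h2 hp2s')
          have hadj : (codeGraph T S e).Adj (e.symm ⟨u, hu⟩) (e.symm ⟨s', hs'⟩) := by
            rw [codeGraph_adj, e.apply_symm_apply, e.apply_symm_apply]
            exact hedist
          have hdle : T.dist s' v ≤ d := by
            have t1 : T.dist s' p2 ≤ 1 := by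
              have := dist_le hp2s'.symm.toWalk
              simpa using this
            have t2 : T.dist p2 v ≤ r.length := dist_le r
            have t3 := hT.isConnected.dist_triangle (u := s') (v := p2) (w := v)
            omega
          exact hadj.reachable.trans (ih s' v hs' hv hdle)
  obtain ⟨s0, hs0⟩ := hS
  haveI : Nonempty (Fin n) := ⟨e.symm ⟨s0, hs0⟩⟩
  refine ⟨fun i j => ?_⟩
  have := key (T.dist (e i : V) (e j : V)) (e i : V) (e j : V) (e i).2 (e j).2 le_rfl
  simpa using this

lemma walk_lift [Fintype V] (hpack : Is2Packing T S) {n : ℕ} (e : Fin n ≃ S)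
    {i j : Fin n} {a b : V} (h1 : T.Adj (e i : V) a) (h3 : T.Adj b (e j : V))
    (haS : a ∉ S) (hbS : b ∉ S) :
    ∀ {k : Fin n} (q : (codeGraph T S e).Walk k j), s(i,j) ∉ q.edges →
      ∃ W : T.Walk (e k : V) (e j : V), s(a,b) ∉ W.edges := by
  intro k q
  induction q with
  | nil => exact fun _ => ⟨Walk.nil, by simp⟩
  | cons hkl q' ih =>
    intro hne
    rw [Walk.edges_cons, List.mem_cons] at hne
    push_neg at hne
    obtain ⟨hne1, hne2⟩ := hne
    obtain ⟨W', hW'⟩ := ih h3 hne2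
    obtain ⟨x, y, g1, g2, g3, hxS, hyS, -, -⟩ :=
      adj_decode hpack (e _).2 (e _).2 (codeGraph_adj.mp hkl)
    refine ⟨Walk.cons g1 (Walk.cons g2 (Walk.cons g3 W')), ?_⟩
    simp only [Walk.edges_cons, List.mem_cons]
    push_neg
    refine ⟨?_, ?_, ?_, hW'⟩
    · intro h
      rw [Sym2.eq_iff] at h
      rcases h with ⟨hea, -⟩ | ⟨-, heb⟩
      · exact haS (by rw [hea]; exact Subtype.coe_prop _)
      · exact hbS (by rw [heb]; exact Subtype.coe_prop _)
    · intro h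
      rw [Sym2.eq_iff] at h
      rcases h with ⟨rfl, rfl⟩ | ⟨rfl, rfl⟩
      · have hki := e_val_inj e
          (dominator_unique hpack (e _).2 (e i).2 g1.symm h1.symm)
        have hlj := e_val_inj e
          (dominator_unique hpack (e _).2 (e _).2 g3 h3)
        exact hne1 (by rw [hki, hlj])
      · have hkj := e_val_inj e
          (dominator_unique hpack (e _).2 (e _).2 g1.symm h3)
        have hli := e_val_inj e
          (dominator_unique hpack (e _).2 (e i).2 g3 h1.symm)
        exact hne1 (by rw [hkj, hli]; exact Sym2.eq_swap)
    · intro h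
      rw [Sym2.eq_iff] at h
      rcases h with ⟨-, heb⟩ | ⟨hea, -⟩
      · exact hbS (by rw [heb]; exact Subtype.coe_prop _)
      · exact haS (by rw [hea]; exact Subtype.coe_prop _)

lemma code_acyclic [Fintype V] (hT : T.IsTree) (hpack : Is2Packing T S)
    {n : ℕ} (e : Fin n ≃ S) : (codeGraph T S e).IsAcyclic := by
  rw [isAcyclic_iff_forall_adj_isBridge]
  intro i j hij
  rw [isBridge_iff_adj_and_forall_walk_mem_edges]
  refine fun p => ?_
  by_contra hmem
  obtain ⟨a, b, h1, h2, h3, haS, hbS, -, -⟩ :=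
    adj_decode hpack (e i).2 (e j).2 (codeGraph_adj.mp hij)
  obtain ⟨W, hW⟩ := walk_lift hpack e h1 h3 haS hbS p hmem
  have hbr := isAcyclic_iff_forall_adj_isBridge.mp hT.IsAcyclic h2
  rw [isBridge_iff_adj_and_forall_walk_mem_edges] at hbr
  have hmem2 := hbr (Walk.cons h1.symm (W.concat h3.symm))
  rw [Walk.edges_cons, List.mem_cons] at hmem2
  rcases hmem2 with h | h
  · rw [Sym2.eq_iff] at h
    rcases h with ⟨-, heb⟩ | ⟨-, hba⟩
    · exact hbS (by rw [heb]; exact (e i).2)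
    · exact h2.ne hba.symm
  · rw [Walk.edges_concat, List.concat_eq_append, List.mem_append] at h
    rcases h with h | h
    · exact hW h
    · simp only [List.mem_singleton] at h
      rw [Sym2.eq_iff] at h
      rcases h with ⟨hea, -⟩ | ⟨hab2, -⟩
      · exact haS (by rw [hea]; exact (e j).2)
      · exact h2.ne hab2

theorem unique_to_corona [Fintype V] {T : SimpleGraph V} {S : Set V} (hT : T.IsTree)
    (h3 : 3 ≤ Fintype.card V) (hdom : IsDominating T S) (hpack : Is2Packing T S)
    (hleaf : ∀ v : V, IsLeaf T v → v ∈ S) : IsGeneralCoronaOfTree T := by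
  classical
  have hcex : ∀ w : V, ∃ s, s ∈ S ∧ (w ∉ S → T.Adj s w) ∧ (w ∈ S → s = w) := by
    intro w
    by_cases hw : w ∈ S
    · exact ⟨w, hw, fun h => absurd hw h, fun _ => rfl⟩
    · obtain ⟨s, hs, hadj⟩ := hdom w hw
      exact ⟨s, hs, fun _ => hadj.symm, fun h => absurd h hw⟩
  choose c hcS hcAdj hcEq using hcex
  have hSne : S.Nonempty := by
    have hne : Nonempty V := Fintype.card_pos_iff.mp (by omega)
    obtain ⟨v⟩ := hne
    exact ⟨c v, hcS v⟩
  set n := Fintype.card S with hn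
  set e : Fin n ≃ S := (Fintype.equivFin ↥S).symm with he
  -- uniqueness of the dominator
  have hcU : ∀ w s, w ∉ S → s ∈ S → T.Adj s w → s = c w := by
    intro w s hw hs hadj
    exact dominator_unique hpack hs (hcS w) hadj.symm (hcAdj w hw).symm
  refine ⟨n, codeGraph T S e, codePart hT hdom hpack hleaf e,
    ⟨code_connected hT hdom hpack hSne e, code_acyclic hT hpack e⟩, ?_⟩
  have hmem : ∀ w (h : w ∉ S),
      codeNbhd T w e ∈ (codePart hT hdom hpack hleaf e).part (e.symm ⟨c w, hcS w⟩) := by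
    intro w h
    refine ⟨w, h, ?_, rfl⟩
    rw [e.apply_symm_apply]
    exact hcAdj w h
  let f : V → CoronaVert (codeGraph T S e) (codePart hT hdom hpack hleaf e) := fun v =>
    if h : v ∈ S then Sum.inl (e.symm ⟨v, h⟩)
    else Sum.inr ⟨(e.symm ⟨c v, hcS v⟩, codeNbhd T v e), hmem v h⟩
  -- injectivity
  have hinj : Function.Injective f := by
    intro v w hvw
    by_cases hv : v ∈ S <;> by_cases hw : w ∈ S <;>
      simp only [f, dif_pos, dif_neg, hv, hw] at hvw
    · have := e.symm.injective (Sum.inl.inj hvw)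
      exact congrArg Subtype.val this
    · exact absurd hvw (by simp)
    · exact absurd hvw (by simp)
    · have hpair := Subtype.mk.injEq _ _ _ _ ▸ (Sum.inr.inj hvw)
      have h1 : e.symm ⟨c v, hcS v⟩ = e.symm ⟨c w, hcS w⟩ := congrArg Prod.fst hpair
      have h2 : codeNbhd T v e = codeNbhd T w e := congrArg Prod.snd hpair
      have hcvw : c v = c w := congrArg Subtype.val (e.symm.injective h1)
      obtain ⟨j, hj⟩ := codeNbhd_nonempty hT hdom hpack hleaf e (hcS v) hv (hcAdj v hv)
      have hj2 : T.edist w (e j : V) = 2 := by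
        have : j ∈ codeNbhd T w e := h2 ▸ hj
        exact this
      obtain ⟨a, ha1, ha2, haS, hsu, -⟩ :=
        mem_code_decode hpack (e j).2 (hcS v) (hcAdj v hv) hj
      obtain ⟨b, hb1, hb2, hbS, -, -⟩ :=
        mem_code_decode hpack (e j).2 (hcS v) (hcvw ▸ hcAdj w hw) hj2
      exact (mid_unique hT hpack (hcS v) (e j).2 hsu (hcAdj v hv) ha1 ha2
        (hcvw ▸ hcAdj w hw) hb1 hb2 hv haS hw hbS).1
  -- surjectivity
  have hsurj : Function.Surjective f := by
    rintro (i | ⟨⟨i, A⟩, hA⟩)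
    · refine ⟨(e i : V), ?_⟩
      simp only [f, dif_pos (e i).2]
      congr 1
      rw [Subtype.coe_eta, e.symm_apply_apply]
    · obtain ⟨w, hw, hsw, hAeq⟩ := hA
      have hAeq' : A = codeNbhd T w e := hAeq
      subst hAeq'
      refine ⟨w, ?_⟩
      simp only [f, dif_neg hw]
      have hcw : c w = (e i : V) := (hcU w (e i : V) hw (e i).2 hsw).symm
      congr 1
      refine Subtype.ext ?_
      refine Prod.ext ?_ rfl
      show e.symm ⟨c w, hcS w⟩ = i
      rw [show (⟨c w, hcS w⟩ : S) = e i from Subtype.ext hcw, e.symm_apply_apply]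
  -- adjacency
  have hiff : ∀ a b : V,
      (corona (codeGraph T S e) (codePart hT hdom hpack hleaf e)).Adj (f a) (f b) ↔
        T.Adj a b := by
    intro a b
    by_cases ha : a ∈ S <;> by_cases hb : b ∈ S
    · simp only [f, dif_pos ha, dif_pos hb]
      constructor
      · intro h
        exact absurd h corona_adj_inl_inl
      · intro h
        exact absurd h (fun h' => packing_not_adj hpack ha hb h')
    · simp only [f, dif_pos ha, dif_neg hb, corona_adj_inl_inr]
      constructor
      · intro h
        have h' : (⟨a, ha⟩ : S) = ⟨c b, hcS b⟩ := e.symm.injective h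
        have h2 : a = c b := congrArg Subtype.val h'
        rw [h2]
        exact hcAdj b hb
      · intro h
        have h2 : a = c b := hcU b a hb ha h
        exact congrArg e.symm (Subtype.ext h2)
    · simp only [f, dif_neg ha, dif_pos hb, corona_adj_inr_inl]
      constructor
      · intro h
        have h' : (⟨b, hb⟩ : S) = ⟨c a, hcS a⟩ := e.symm.injective h
        have h2 : b = c a := congrArg Subtype.val h'
        rw [h2]
        exact (hcAdj a ha).symm
      · intro h
        have h2 : b = c a := hcU a b ha hb h.symm
        exact congrArg e.symm (Subtype.ext h2)
    · simp only [f, dif_neg ha, dif_neg hb, corona_adj_inr_inr]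
      constructor
      · rintro ⟨hne, hadj3, hm1, hm2⟩
        have hadj3' : T.edist (c a) (c b) = 3 := by
          have h' := codeGraph_adj.mp hadj3
          rwa [e.apply_symm_apply, e.apply_symm_apply] at h'
        have hm1' : T.edist a (c b) = 2 := by
          have h' : T.edist a (e (e.symm ⟨c b, hcS b⟩) : V) = 2 := hm1
          rwa [e.apply_symm_apply] at h'
        have hm2' : T.edist b (c a) = 2 := by
          have h' : T.edist b (e (e.symm ⟨c a, hcS a⟩) : V) = 2 := hm2
          rwa [e.apply_symm_apply] at h'
        obtain ⟨m, hm_a, hm_cb, hmS, hsu, -⟩ :=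
          mem_code_decode hpack (hcS b) (hcS a) (hcAdj a ha) hm1'
        obtain ⟨m', hm'_b, hm'_ca, hm'S, -, -⟩ :=
          mem_code_decode hpack (hcS a) (hcS b) (hcAdj b hb) hm2'
        have hmid := mid_unique hT hpack (hcS a) (hcS b) hsu (hcAdj a ha) hm_a hm_cb
          hm'_ca.symm hm'_b.symm (hcAdj b hb).symm ha hmS hm'S hb
        exact hmid.2 ▸ hm_a
      · intro hadj
        have hcc : c a ≠ c b := by
          intro hcc
          exact no_triangle hT (hcAdj a ha) hadj (hcc ▸ hcAdj b hb).symm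
        refine ⟨?_, ?_, ?_, ?_⟩
        · intro hEq
          apply hcc
          have h1 : e.symm ⟨c a, hcS a⟩ = e.symm ⟨c b, hcS b⟩ := by
            have := congrArg (fun x => x.val.1) hEq
            exact this
          have h2 := congrArg e h1
          rw [e.apply_symm_apply, e.apply_symm_apply] at h2
          exact congrArg Subtype.val h2
        · show (codeGraph T S e).Adj _ _
          rw [codeGraph_adj, e.apply_symm_apply, e.apply_symm_apply]
          exact enat_eq_three (hpack _ (hcS a) _ (hcS b) hcc)
            (edist_le_three (hcAdj a ha) hadj (hcAdj b hb).symm)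
        · show T.edist a (e (e.symm ⟨c b, hcS b⟩) : V) = 2
          rw [e.apply_symm_apply]
          refine enat_eq_two (edist_le_two hadj (hcAdj b hb).symm) ?_ ?_
          · rw [Ne, edist_eq_zero_iff]
            intro h0
            exact ha (h0 ▸ hcS b)
          · rw [Ne, edist_eq_one_iff_adj]
            intro h1
            exact hcc (hcU a (c b) ha (hcS b) h1.symm).symm
        · show T.edist b (e (e.symm ⟨c a, hcS a⟩) : V) = 2
          rw [e.apply_symm_apply]
          refine enat_eq_two (edist_le_two hadj.symm (hcAdj a ha).symm) ?_ ?_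
          · rw [Ne, edist_eq_zero_iff]
            intro h0
            exact hb (h0 ▸ hcS a)
          · rw [Ne, edist_eq_one_iff_adj]
            intro h1
            exact hcc (hcU b (c a) hb (hcS a) h1.symm)
  exact ⟨⟨Equiv.ofBijective f ⟨hinj, hsurj⟩, hiff _ _⟩⟩

end Forward

/-- A finite tree `T` with at least three vertices has a unique dominating
2-packing containing all its leaves if and only if `T` is a general corona of a tree. -/
theorem uniquePacking_iff_isGeneralCorona {V : Type u} [Fintype V]
    (T : SimpleGraph V) (hT : T.IsTree) (h3 : 3 ≤ Fintype.card V) :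
    (∃! S : Set V, IsDominating T S ∧ Is2Packing T S ∧
        ∀ v : V, IsLeaf T v → v ∈ S) ↔
      IsGeneralCoronaOfTree T := by
  constructor
  · rintro ⟨S, ⟨hdom, hpack, hleaf⟩, -⟩
    exact unique_to_corona hT h3 hdom hpack hleaf
  · exact corona_to_unique hT

end GenCorona
end

section
/- For every finite tree T with at least three vertices, the domination subdivision number of T satisfies 1 ≤ sd(T) ≤ 3. -/
open SimpleGraph

namespace GenCorona

universe u

variable {V : Type u}

section AuxProof
variable {V : Type u}

section Infra
variable {V : Type u}
variable (T : SimpleGraph V) (F : Set (Sym2 V))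
lemma subdivide_adj_inl_inl {u v : V} :
    (subdivide T F).Adj (Sum.inl u) (Sum.inl v) ↔ T.Adj u v ∧ s(u, v) ∉ F := by
  constructor
  · rintro ⟨hne, h | h⟩
    · exact h
    · exact ⟨h.1.symm, by rw [Sym2.eq_swap]; exact h.2⟩
  · intro h
    exact ⟨by simp [h.1.ne], Or.inl h⟩
lemma subdivide_adj_inl_inr {u : V} {e : F} :
    (subdivide T F).Adj (Sum.inl u) (Sum.inr e) ↔ u ∈ (e : Sym2 V) := by
  constructor
  · rintro ⟨hne, h | h⟩
    · exact h
    · exact h.elim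
  · intro h
    exact ⟨by simp, Or.inl h⟩
lemma subdivide_adj_inr_inr {e e' : F} :
    ¬ (subdivide T F).Adj (Sum.inr e) (Sum.inr e') := by
  rintro ⟨hne, h | h⟩ <;> exact h
lemma subdivide_adj_cases {x : V ⊕ F} {u : V}
    (h : (subdivide T F).Adj (Sum.inl u) x) :
    (∃ d, x = Sum.inl d ∧ T.Adj u d ∧ s(u, d) ∉ F) ∨
      (∃ e : F, x = Sum.inr e ∧ u ∈ (e : Sym2 V)) := by
  cases x with
  | inl d => exact Or.inl ⟨d, rfl, (subdivide_adj_inl_inl T F).1 h⟩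
  | inr e => exact Or.inr ⟨e, rfl, (subdivide_adj_inl_inr T F).1 h⟩
variable {W : Type u}
lemma dominationNumber_le (G : SimpleGraph W) {D : Set W} (h : IsDominating G D) :
    dominationNumber G ≤ D.ncard :=
  Nat.sInf_le ⟨D, h, rfl⟩
lemma exists_min_dominating (G : SimpleGraph W) [Finite W] :
    ∃ D : Set W, IsDominating G D ∧ D.ncard = dominationNumber G := by
  have hne : {n : ℕ | ∃ D : Set W, IsDominating G D ∧ D.ncard = n}.Nonempty :=
    ⟨(Set.univ : Set W).ncard, Set.univ, fun v hv => absurd (Set.mem_univ v) hv, rfl⟩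
  obtain ⟨D, hD, hcard⟩ := Nat.sInf_mem hne
  exact ⟨D, hD, hcard⟩
lemma dominationNumber_lt_ncard [Finite W]
    {D : Set V} (hD : IsDominating T D) {D3 : Set W} (φ : V → W)
    (hmaps : ∀ a ∈ D, φ a ∈ D3) (hinj : Set.InjOn φ D)
    {α : W} (hα : α ∈ D3) (hα2 : α ∉ φ '' D) :
    dominationNumber T < D3.ncard := by
  have h1 : dominationNumber T ≤ D.ncard := dominationNumber_le T hD
  have h2 : (φ '' D).ncard = D.ncard := Set.ncard_image_of_injOn hinj
  have h3 : (φ '' D).ncard < D3.ncard := by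
    refine Set.ncard_lt_ncard ?_ (Set.toFinite D3)
    refine (Set.ssubset_iff_of_subset ?_).2 ⟨α, hα, hα2⟩
    rintro _ ⟨a, ha, rfl⟩
    exact hmaps a ha
  omega
end Infra

section Claims
variable {V : Type u}
variable [Finite V] {T : SimpleGraph V}

/-- L1: if a vertex `v1` has two leaf neighbors, subdividing one pendant edge
increases the domination number. -/
lemma claim_two_leaves {v0 v1 l0 : V}
    (h01 : T.Adj v0 v1) (hl : T.Adj v1 l0) (hne : v0 ≠ l0)
    (hN0 : ∀ z, T.Adj v0 z → z = v1) (hNl : ∀ z, T.Adj l0 z → z = v1) :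
    dominationNumber T < dominationNumber (subdivide T {s(v0, v1)}) := by
  classical
  set F : Set (Sym2 V) := {s(v0, v1)} with hF
  obtain ⟨D3, hdom3, hcard3⟩ := exists_min_dominating (subdivide T F)
  rw [← hcard3]
  have he1 : s(v0, v1) ∈ F := rfl
  set e1 : F := ⟨s(v0, v1), he1⟩ with he1d
  -- the α element: dominator of v0
  have hα : ∃ a ∈ D3, a = Sum.inl v0 ∨ a = Sum.inr e1 := by
    by_cases h : Sum.inl v0 ∈ D3
    · exact ⟨_, h, Or.inl rfl⟩
    · obtain ⟨d, hd, hadj⟩ := hdom3 _ h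
      rcases subdivide_adj_cases T F hadj with ⟨d', rfl, hTd, hfd⟩ | ⟨e, rfl, hve⟩
      · exact absurd (by rw [hN0 _ hTd]; exact he1) hfd
      · refine ⟨_, hd, Or.inr ?_⟩
        congr 1
        exact Subtype.ext e.prop
  -- the β element : dominator of l0
  have hβ : ∃ b ∈ D3, b = Sum.inl l0 ∨ b = Sum.inl v1 := by
    by_cases h : Sum.inl l0 ∈ D3
    · exact ⟨_, h, Or.inl rfl⟩
    · obtain ⟨d, hd, hadj⟩ := hdom3 _ h
      rcases subdivide_adj_cases T F hadj with ⟨d', rfl, hTd, hfd⟩ | ⟨e, rfl, hve⟩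
      · exact ⟨_, hd, Or.inr (by rw [hNl _ hTd])⟩
      · exfalso
        have : (e : Sym2 V) = s(v0, v1) := e.prop
        rw [this, Sym2.mem_iff] at hve
        rcases hve with rfl | rfl
        · exact hne rfl
        · exact hl.ne' rfl
  obtain ⟨a, haD, ha⟩ := hα
  obtain ⟨b, hbD, hb⟩ := hβ
  set R : Set V := {r | Sum.inl r ∈ D3 ∧ r ≠ v0 ∧ r ≠ l0 ∧ r ≠ v1} with hR
  set D : Set V := insert v1 R with hD
  have hv1D : v1 ∈ D := Set.mem_insert _ _
  -- D dominates T
  have hDdom : IsDominating T D := by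
    intro v hv
    have hvne1 : v ≠ v1 := fun h => hv (h ▸ hv1D)
    by_cases hv0 : v = v0
    · exact ⟨v1, hv1D, hv0 ▸ h01⟩
    by_cases hvl : v = l0
    · exact ⟨v1, hv1D, hvl ▸ hl.symm⟩
    have hvD3 : Sum.inl v ∉ D3 := fun h => hv (Set.mem_insert_of_mem _ ⟨h, hv0, hvl, hvne1⟩)
    obtain ⟨d, hd, hadj⟩ := hdom3 _ hvD3
    rcases subdivide_adj_cases T F hadj with ⟨d', rfl, hTd, hfd⟩ | ⟨e, rfl, hve⟩
    · by_cases hd0 : d' = v0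
      · exact absurd (hN0 v (hd0 ▸ hTd.symm)) hvne1
      by_cases hdl : d' = l0
      · exact absurd (hNl v (hdl ▸ hTd.symm)) hvne1
      by_cases hd1 : d' = v1
      · exact ⟨v1, hv1D, hd1 ▸ hTd⟩
      · exact ⟨d', Set.mem_insert_of_mem _ ⟨hd, hd0, hdl, hd1⟩, hTd⟩
    · exfalso
      have : (e : Sym2 V) = s(v0, v1) := e.prop
      rw [this, Sym2.mem_iff] at hve
      rcases hve with rfl | rfl
      · exact hv0 rfl
      · exact hvne1 rfl
  -- the injection
  set φ : V → V ⊕ F := fun r => if r = v1 then b else Sum.inl r with hφ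
  have hmaps : ∀ r ∈ D, φ r ∈ D3 := by
    intro r hr
    rcases Set.mem_insert_iff.1 hr with rfl | hrR
    · simpa [hφ] using hbD
    · have : φ r = Sum.inl r := by simp [hφ, hrR.2.2.2]
      rw [this]; exact hrR.1
  have hinj : Set.InjOn φ D := by
    intro r hr r' hr' heq
    rcases Set.mem_insert_iff.1 hr with rfl | hrR <;>
      rcases Set.mem_insert_iff.1 hr' with rfl | hrR'
    · rfl
    · exfalso
      simp only [hφ, if_pos rfl, if_neg hrR'.2.2.2] at heq
      rcases hb with rfl | rfl
      · exact hrR'.2.2.1 (Sum.inl_injective heq.symm)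
      · exact hrR'.2.2.2 (Sum.inl_injective heq.symm)
    · exfalso
      simp only [hφ, if_pos rfl, if_neg hrR.2.2.2] at heq
      rcases hb with rfl | rfl
      · exact hrR.2.2.1 (Sum.inl_injective heq)
      · exact hrR.2.2.2 (Sum.inl_injective heq)
    · simpa [hφ, if_neg hrR.2.2.2, if_neg hrR'.2.2.2] using heq
  refine dominationNumber_lt_ncard T hDdom φ hmaps hinj haD ?_
  rintro ⟨r, hr, hre⟩
  rcases Set.mem_insert_iff.1 hr with rfl | hrR
  · simp only [hφ, if_pos rfl] at hre
    rcases hb with rfl | rfl <;> rcases ha with rfl | rfl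
    · exact hne (Sum.inl_injective hre).symm
    · exact nomatch hre
    · exact h01.ne (Sum.inl_injective hre).symm
    · exact nomatch hre
  · have : φ r = Sum.inl r := by simp [hφ, hrR.2.2.2]
    rw [this] at hre
    rcases ha with rfl | rfl
    · exact hrR.2.1 (Sum.inl_injective hre)
    · exact nomatch hre

/-- Claim A: if `v0` is a leaf with support `v1`, `v2` a further neighbor of `v1`,
and `l` a leaf neighbor of `v2`, then subdividing the three edges
`v0v1, v1v2, v2l` increases the domination number. -/
lemma claim_leaf_at_v2 {v0 v1 v2 l : V}
    (h01 : T.Adj v0 v1) (h12 : T.Adj v1 v2) (hl2 : T.Adj v2 l)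
    (hlv1 : l ≠ v1) (h02 : v0 ≠ v2)
    (hN0 : ∀ z, T.Adj v0 z → z = v1) (hNl : ∀ z, T.Adj l z → z = v2) :
    dominationNumber T <
      dominationNumber (subdivide T {s(v0, v1), s(v1, v2), s(v2, l)}) := by
  classical
  set F : Set (Sym2 V) := {s(v0, v1), s(v1, v2), s(v2, l)} with hF
  have he1 : s(v0, v1) ∈ F := Or.inl rfl
  have he2 : s(v1, v2) ∈ F := Or.inr (Or.inl rfl)
  have he3 : s(v2, l) ∈ F := Or.inr (Or.inr rfl)
  set e1 : F := ⟨s(v0, v1), he1⟩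
  set e2 : F := ⟨s(v1, v2), he2⟩
  set e3 : F := ⟨s(v2, l), he3⟩
  -- distinctness
  have hne01 : v0 ≠ v1 := h01.ne
  have hne12 : v1 ≠ v2 := h12.ne
  have hne2l : v2 ≠ l := hl2.ne
  have hlv0 : l ≠ v0 := by
    intro h
    exact hne12 (hN0 v2 (by rw [← h]; exact hl2.symm)).symm
  have hmemF : ∀ x ∈ F, x = s(v0, v1) ∨ x = s(v1, v2) ∨ x = s(v2, l) := by
    intro x hx
    rcases hx with h | h | h
    · exact Or.inl h
    · exact Or.inr (Or.inl h)
    · exact Or.inr (Or.inr h)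
  have hd12 : s(v0, v1) ≠ s(v1, v2) := by
    intro hcon
    rw [Sym2.eq_iff] at hcon
    rcases hcon with ⟨h1, _⟩ | ⟨h1, _⟩
    · exact hne01 h1
    · exact h02 h1
  have hd13 : s(v0, v1) ≠ s(v2, l) := by
    intro hcon
    rw [Sym2.eq_iff] at hcon
    rcases hcon with ⟨h1, _⟩ | ⟨h1, _⟩
    · exact h02 h1
    · exact hlv0 h1.symm
  have hd23 : s(v1, v2) ≠ s(v2, l) := by
    intro hcon
    rw [Sym2.eq_iff] at hcon
    rcases hcon with ⟨h1, _⟩ | ⟨h1, _⟩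
    · exact hne12 h1
    · exact hlv1 h1.symm
  obtain ⟨D3, hdom3, hcard3⟩ := exists_min_dominating (subdivide T F)
  rw [← hcard3]
  -- the α element : dominator of v0
  have hα : ∃ a ∈ D3, a = Sum.inl v0 ∨ a = Sum.inr e1 := by
    by_cases h : Sum.inl v0 ∈ D3
    · exact ⟨_, h, Or.inl rfl⟩
    · obtain ⟨d, hd, hadj⟩ := hdom3 _ h
      rcases subdivide_adj_cases T F hadj with ⟨d', rfl, hTd, hfd⟩ | ⟨e, rfl, hve⟩
      · exact absurd (by rw [hN0 _ hTd]; exact he1) hfd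
      · rcases hmemF _ e.prop with he | he | he
        · exact ⟨_, hd, Or.inr (by congr 1; exact Subtype.ext he)⟩
        · rw [he, Sym2.mem_iff] at hve
          rcases hve with rfl | rfl
          · exact absurd rfl hne01
          · exact absurd rfl h02
        · rw [he, Sym2.mem_iff] at hve
          rcases hve with rfl | rfl
          · exact absurd rfl h02.symm
          · exact absurd rfl hlv0
  obtain ⟨a, haD, ha⟩ := hα
  -- if x3 is not in D3 then l must be
  have hlD3 : Sum.inr e3 ∉ D3 → Sum.inl l ∈ D3 := by
    intro hx3
    by_cases h : Sum.inl l ∈ D3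
    · exact h
    exfalso
    obtain ⟨d, hd, hadj⟩ := hdom3 _ h
    rcases subdivide_adj_cases T F hadj with ⟨d', rfl, hTd, hfd⟩ | ⟨e, rfl, hve⟩
    · refine hfd ?_
      rw [hNl _ hTd, Sym2.eq_swap]
      exact he3
    · rcases hmemF _ e.prop with he | he | he
      · rw [he, Sym2.mem_iff] at hve
        rcases hve with rfl | rfl
        · exact hlv0 rfl
        · exact hlv1 rfl
      · rw [he, Sym2.mem_iff] at hve
        rcases hve with rfl | rfl
        · exact hlv1 rfl
        · exact hne2l rfl
      · refine hx3 ?_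
        have : e = e3 := Subtype.ext he
        rwa [← this]
  set R : Set V := {r | Sum.inl r ∈ D3 ∧ r ≠ v0 ∧ r ≠ v1 ∧ r ≠ v2 ∧ r ≠ l} with hR
  set D : Set V := insert v1 (insert v2 R) with hD
  have hv1D : v1 ∈ D := Set.mem_insert _ _
  have hv2D : v2 ∈ D := Set.mem_insert_of_mem _ (Set.mem_insert _ _)
  have hDdom : IsDominating T D := by
    intro v hv
    have hvne1 : v ≠ v1 := fun h => hv (h ▸ hv1D)
    have hvne2 : v ≠ v2 := fun h => hv (h ▸ hv2D)
    by_cases hv0 : v = v0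
    · exact ⟨v1, hv1D, hv0 ▸ h01⟩
    by_cases hvl : v = l
    · exact ⟨v2, hv2D, hvl ▸ hl2.symm⟩
    have hvD3 : Sum.inl v ∉ D3 := fun h =>
      hv (Set.mem_insert_of_mem _ (Set.mem_insert_of_mem _ ⟨h, hv0, hvne1, hvne2, hvl⟩))
    obtain ⟨d, hd, hadj⟩ := hdom3 _ hvD3
    rcases subdivide_adj_cases T F hadj with ⟨d', rfl, hTd, hfd⟩ | ⟨e, rfl, hve⟩
    · by_cases hd0 : d' = v0
      · exact absurd (hN0 v (hd0 ▸ hTd.symm)) hvne1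
      by_cases hdl : d' = l
      · exact absurd (hNl v (hdl ▸ hTd.symm)) hvne2
      by_cases hd1 : d' = v1
      · exact ⟨v1, hv1D, hd1 ▸ hTd⟩
      by_cases hd2 : d' = v2
      · exact ⟨v2, hv2D, hd2 ▸ hTd⟩
      · exact ⟨d', Set.mem_insert_of_mem _ (Set.mem_insert_of_mem _ ⟨hd, hd0, hd1, hd2, hdl⟩), hTd⟩
    · exfalso
      rcases hmemF _ e.prop with he | he | he <;> rw [he, Sym2.mem_iff] at hve <;>
        rcases hve with rfl | rfl
      · exact hv0 rfl
      · exact hvne1 rfl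
      · exact hvne1 rfl
      · exact hvne2 rfl
      · exact hvne2 rfl
      · exact hvl rfl
  -- a ∉ image facts
  have haval : ∀ r : V, r ≠ v0 → a ≠ Sum.inl r := by
    intro r hr hcon
    rcases ha with rfl | rfl
    · exact hr (Sum.inl_injective hcon).symm
    · exact nomatch hcon
  -- CASE II abstract
  have caseII : ∀ β1 β2 : V ⊕ F, β1 ∈ D3 → β2 ∈ D3 → β1 ≠ β2 →
      (β1 = Sum.inl v1 ∨ β1 = Sum.inr e2 ∨ β1 = Sum.inr e3) →
      (β2 = Sum.inl v2 ∨ β2 = Sum.inr e3) →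
      dominationNumber T < D3.ncard := by
    intro β1 β2 hb1D hb2D hb12 hb1 hb2
    set φ : V → V ⊕ F := fun r => if r = v1 then β1 else if r = v2 then β2 else Sum.inl r
      with hφ
    have hφval : ∀ r, r ≠ v1 → r ≠ v2 → φ r = Sum.inl r := by
      intro r h1 h2; simp [hφ, h1, h2]
    have hmaps : ∀ r ∈ D, φ r ∈ D3 := by
      intro r hr
      rcases Set.mem_insert_iff.1 hr with rfl | hr
      · simpa [hφ] using hb1D
      rcases Set.mem_insert_iff.1 hr with rfl | hr
      · simpa [hφ, hne12.symm] using hb2D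
      · rw [hφval r hr.2.2.1 hr.2.2.2.1]; exact hr.1
    have hb1R : ∀ r : V, r ≠ v1 → β1 ≠ Sum.inl r := by
      intro r hr hcon
      rcases hb1 with rfl | rfl | rfl
      · exact hr (Sum.inl_injective hcon).symm
      · exact nomatch hcon
      · exact nomatch hcon
    have hb2R : ∀ r : V, r ≠ v2 → β2 ≠ Sum.inl r := by
      intro r hr hcon
      rcases hb2 with rfl | rfl
      · exact hr (Sum.inl_injective hcon).symm
      · exact nomatch hcon
    have hinj : Set.InjOn φ D := by
      intro r hr r' hr' heq
      have hcases : ∀ x ∈ D, x = v1 ∨ x = v2 ∨ (x ≠ v1 ∧ x ≠ v2) := by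
        intro x hx
        by_cases h1 : x = v1
        · exact Or.inl h1
        by_cases h2 : x = v2
        · exact Or.inr (Or.inl h2)
        · exact Or.inr (Or.inr ⟨h1, h2⟩)
      rcases hcases r hr with rfl | rfl | ⟨hr1, hr2⟩ <;>
        rcases hcases r' hr' with rfl | rfl | ⟨hr1', hr2'⟩
      · rfl
      · exfalso
        simp only [hφ, if_pos rfl, if_neg hne12.symm] at heq
        exact hb12 heq
      · exfalso
        rw [hφval r' hr1' hr2'] at heq
        simp only [hφ, if_pos rfl] at heq
        exact hb1R r' hr1' heq
      · exfalso
        simp only [hφ, if_pos rfl, if_neg hne12.symm] at heq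
        exact hb12 heq.symm
      · rfl
      · exfalso
        rw [hφval r' hr1' hr2'] at heq
        simp only [hφ, if_neg hne12.symm, if_pos rfl] at heq
        exact hb2R r' hr2' heq
      · exfalso
        rw [hφval r hr1 hr2] at heq
        simp only [hφ, if_pos rfl] at heq
        exact hb1R r hr1 heq.symm
      · exfalso
        rw [hφval r hr1 hr2] at heq
        simp only [hφ, if_neg hne12.symm, if_pos rfl] at heq
        exact hb2R r hr2 heq.symm
      · rw [hφval r hr1 hr2, hφval r' hr1' hr2'] at heq
        exact Sum.inl_injective heq
    refine dominationNumber_lt_ncard T hDdom φ hmaps hinj haD ?_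
    rintro ⟨r, hr, hre⟩
    rcases Set.mem_insert_iff.1 hr with rfl | hr
    · simp only [hφ, if_pos rfl] at hre
      rcases hb1 with rfl | rfl | rfl <;> rcases ha with rfl | rfl
      · exact hne01 (Sum.inl_injective hre).symm
      · exact nomatch hre
      · exact nomatch hre
      · exact hd12 (congrArg Subtype.val (Sum.inr_injective hre)).symm
      · exact nomatch hre
      · exact hd13 (congrArg Subtype.val (Sum.inr_injective hre)).symm
    rcases Set.mem_insert_iff.1 hr with rfl | hr
    · simp only [hφ, if_neg hne12.symm, if_pos rfl] at hre
      rcases hb2 with rfl | rfl <;> rcases ha with rfl | rfl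
      · exact h02 (Sum.inl_injective hre).symm
      · exact nomatch hre
      · exact nomatch hre
      · exact hd13 (congrArg Subtype.val (Sum.inr_injective hre)).symm
    · rw [hφval r hr.2.2.1 hr.2.2.2.1] at hre
      exact haval r hr.2.1 hre.symm
  by_cases h2D : Sum.inl v2 ∈ D3
  · by_cases hmid : Sum.inl v1 ∈ D3 ∨ Sum.inr e2 ∈ D3 ∨ Sum.inr e3 ∈ D3
    · -- CASE II via hmid
      rcases hmid with hm | hm | hm
      · refine caseII _ _ hm h2D ?_ (Or.inl rfl) (Or.inl rfl)
        intro h; exact hne12 (Sum.inl_injective h)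
      · refine caseII _ _ hm h2D ?_ (Or.inr (Or.inl rfl)) (Or.inl rfl)
        intro h; exact nomatch h
      · refine caseII _ _ hm h2D ?_ (Or.inr (Or.inr rfl)) (Or.inl rfl)
        intro h; exact nomatch h
    · -- CASE I : v2 ∈ D3, v1, x2, x3 ∉ D3
      push_neg at hmid
      obtain ⟨hv1n, hx2n, hx3n⟩ := hmid
      have hlin : Sum.inl l ∈ D3 := hlD3 hx3n
      set φ : V → V ⊕ F := fun r => if r = v1 then Sum.inl l else Sum.inl r with hφ
      have hmaps : ∀ r ∈ D, φ r ∈ D3 := by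
        intro r hr
        rcases Set.mem_insert_iff.1 hr with rfl | hr
        · simpa [hφ] using hlin
        rcases Set.mem_insert_iff.1 hr with rfl | hr
        · simpa [hφ, hne12.symm] using h2D
        · simp only [hφ, if_neg hr.2.2.1]; exact hr.1
      have hinj : Set.InjOn φ D := by
        intro r hr r' hr' heq
        by_cases h1 : r = v1 <;> by_cases h1' : r' = v1
        · rw [h1, h1']
        · exfalso
          subst h1
          simp only [hφ, if_pos rfl, if_neg h1'] at heq
          have : l = r' := Sum.inl_injective heq
          subst this
          rcases Set.mem_insert_iff.1 hr' with h | h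
          · exact h1' h
          rcases Set.mem_insert_iff.1 h with h | h
          · exact hne2l h.symm
          · exact h.2.2.2.2 rfl
        · exfalso
          subst h1'
          simp only [hφ, if_pos rfl, if_neg h1] at heq
          have : r = l := Sum.inl_injective heq
          subst this
          rcases Set.mem_insert_iff.1 hr with h | h
          · exact h1 h
          rcases Set.mem_insert_iff.1 h with h | h
          · exact hne2l h.symm
          · exact h.2.2.2.2 rfl
        · simp only [hφ, if_neg h1, if_neg h1'] at heq
          exact Sum.inl_injective heq
      refine dominationNumber_lt_ncard T hDdom φ hmaps hinj haD ?_
      rintro ⟨r, hr, hre⟩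
      by_cases h1 : r = v1
      · subst h1
        simp only [hφ, if_pos rfl] at hre
        rcases ha with rfl | rfl
        · exact hlv0 (Sum.inl_injective hre)
        · exact nomatch hre
      · simp only [hφ, if_neg h1] at hre
        refine haval r ?_ hre.symm
        intro h
        subst h
        rcases Set.mem_insert_iff.1 hr with h | h
        · exact h1 h
        rcases Set.mem_insert_iff.1 h with h | h
        · exact h02 h
        · exact h.2.1 rfl
  · -- v2 ∉ D3
    have hβ : Sum.inr e2 ∈ D3 ∨ Sum.inl v1 ∈ D3 := by
      by_cases h : Sum.inr e2 ∈ D3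
      · exact Or.inl h
      obtain ⟨d, hd, hadj⟩ := hdom3 _ h
      cases d with
      | inl u =>
        have := (subdivide_adj_inl_inr T F).1 hadj.symm
        rw [Sym2.mem_iff] at this
        rcases this with rfl | rfl
        · exact Or.inr hd
        · exact absurd hd h2D
      | inr e' => exact absurd hadj (subdivide_adj_inr_inr T F)
    by_cases hx3 : Sum.inr e3 ∈ D3
    · rcases hβ with hm | hm
      · refine caseII _ _ hm hx3 ?_ (Or.inr (Or.inl rfl)) (Or.inr rfl)
        intro h
        exact hd23 (congrArg Subtype.val (Sum.inr_injective h))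
      · refine caseII _ _ hm hx3 ?_ (Or.inl rfl) (Or.inr rfl)
        intro h; exact nomatch h
    · -- CASE III : v2 ∉ D3, x3 ∉ D3, β ∈ {v1, x2}
      have hlin : Sum.inl l ∈ D3 := hlD3 hx3
      obtain ⟨β, hbD, hb⟩ : ∃ b ∈ D3, b = Sum.inl v1 ∨ b = Sum.inr e2 := by
        rcases hβ with hm | hm
        · exact ⟨_, hm, Or.inr rfl⟩
        · exact ⟨_, hm, Or.inl rfl⟩
      set φ : V → V ⊕ F := fun r =>
        if r = v1 then β else if r = v2 then Sum.inl l else Sum.inl r with hφ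
      have hφval : ∀ r, r ≠ v1 → r ≠ v2 → φ r = Sum.inl r := by
        intro r hh1 hh2; simp [hφ, hh1, hh2]
      have hmaps : ∀ r ∈ D, φ r ∈ D3 := by
        intro r hr
        rcases Set.mem_insert_iff.1 hr with rfl | hr
        · simpa [hφ] using hbD
        rcases Set.mem_insert_iff.1 hr with rfl | hr
        · simpa [hφ, hne12.symm] using hlin
        · rw [hφval r hr.2.2.1 hr.2.2.2.1]; exact hr.1
      have hbR : ∀ r : V, r ≠ v1 → β ≠ Sum.inl r := by
        intro r hr hcon
        rcases hb with rfl | rfl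
        · exact hr (Sum.inl_injective hcon).symm
        · exact nomatch hcon
      have hinj : Set.InjOn φ D := by
        intro r hr r' hr' heq
        have hmemcase : ∀ x ∈ D, x = v1 ∨ x = v2 ∨ (x ≠ v1 ∧ x ≠ v2 ∧ x ≠ l) := by
          intro x hx
          rcases Set.mem_insert_iff.1 hx with rfl | hx
          · exact Or.inl rfl
          rcases Set.mem_insert_iff.1 hx with rfl | hx
          · exact Or.inr (Or.inl rfl)
          · exact Or.inr (Or.inr ⟨hx.2.2.1, hx.2.2.2.1, hx.2.2.2.2⟩)
        rcases hmemcase r hr with rfl | rfl | ⟨hr1, hr2, hr3⟩ <;>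
          rcases hmemcase r' hr' with rfl | rfl | ⟨hr1', hr2', hr3'⟩
        · rfl
        · exfalso
          simp only [hφ, if_pos rfl, if_neg hne12.symm] at heq
          exact hbR l hlv1 heq
        · exfalso
          rw [hφval r' hr1' hr2'] at heq
          simp only [hφ, if_pos rfl] at heq
          exact hbR r' hr1' heq
        · exfalso
          simp only [hφ, if_pos rfl, if_neg hne12.symm] at heq
          exact hbR l hlv1 heq.symm
        · rfl
        · exfalso
          rw [hφval r' hr1' hr2'] at heq
          simp only [hφ, if_neg hne12.symm, if_pos rfl] at heq
          exact hr3' (Sum.inl_injective heq).symm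
        · exfalso
          rw [hφval r hr1 hr2] at heq
          simp only [hφ, if_pos rfl] at heq
          exact hbR r hr1 heq.symm
        · exfalso
          rw [hφval r hr1 hr2] at heq
          simp only [hφ, if_neg hne12.symm, if_pos rfl] at heq
          exact hr3 (Sum.inl_injective heq.symm).symm
        · rw [hφval r hr1 hr2, hφval r' hr1' hr2'] at heq
          exact Sum.inl_injective heq
      refine dominationNumber_lt_ncard T hDdom φ hmaps hinj haD ?_
      rintro ⟨r, hr, hre⟩
      by_cases h1 : r = v1
      · subst h1
        simp only [hφ, if_pos rfl] at hre
        rcases hb with rfl | rfl <;> rcases ha with rfl | rfl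
        · exact hne01 (Sum.inl_injective hre).symm
        · exact nomatch hre
        · exact nomatch hre
        · exact hd12 (congrArg Subtype.val (Sum.inr_injective hre)).symm
      by_cases h2 : r = v2
      · subst h2
        simp only [hφ, if_neg hne12.symm, if_pos rfl] at hre
        rcases ha with rfl | rfl
        · exact hlv0 (Sum.inl_injective hre)
        · exact nomatch hre
      · rw [hφval r h1 h2] at hre
        refine haval r ?_ hre.symm
        intro h
        subst h
        rcases Set.mem_insert_iff.1 hr with h | h
        · exact h1 h
        rcases Set.mem_insert_iff.1 h with h | h
        · exact h02 h
        · exact h.2.1 rfl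

/-- Claim B: if `v0` is a leaf with support `v1` of degree two, `v2` the other
neighbor of `v1`, `v3` a further neighbor of `v2`, and every other neighbor of `v2`
has a leaf neighbor, then subdividing `v0v1, v1v2, v2v3` increases the domination
number. -/
lemma claim_no_leaf_at_v2 {v0 v1 v2 v3 : V}
    (h01 : T.Adj v0 v1) (h12 : T.Adj v1 v2) (h23 : T.Adj v2 v3)
    (h02 : v0 ≠ v2) (h03 : v0 ≠ v3) (h13 : v1 ≠ v3)
    (hN0 : ∀ z, T.Adj v0 z → z = v1)
    (hN1 : ∀ z, T.Adj v1 z → z = v0 ∨ z = v2)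
    (hsupp : ∀ w, T.Adj v2 w → w ≠ v1 → w ≠ v3 →
      ∃ c, T.Adj w c ∧ ∀ z, T.Adj c z → z = w) :
    dominationNumber T <
      dominationNumber (subdivide T {s(v0, v1), s(v1, v2), s(v2, v3)}) := by
  classical
  set F : Set (Sym2 V) := {s(v0, v1), s(v1, v2), s(v2, v3)} with hF
  have he1 : s(v0, v1) ∈ F := Or.inl rfl
  have he2 : s(v1, v2) ∈ F := Or.inr (Or.inl rfl)
  have he3 : s(v2, v3) ∈ F := Or.inr (Or.inr rfl)
  set e1 : F := ⟨s(v0, v1), he1⟩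
  set e2 : F := ⟨s(v1, v2), he2⟩
  set e3 : F := ⟨s(v2, v3), he3⟩
  have hne01 : v0 ≠ v1 := h01.ne
  have hne12 : v1 ≠ v2 := h12.ne
  have hne23 : v2 ≠ v3 := h23.ne
  have hmemF : ∀ x ∈ F, x = s(v0, v1) ∨ x = s(v1, v2) ∨ x = s(v2, v3) := by
    intro x hx
    rcases hx with h | h | h
    · exact Or.inl h
    · exact Or.inr (Or.inl h)
    · exact Or.inr (Or.inr h)
  have hd12 : s(v0, v1) ≠ s(v1, v2) := by
    intro hcon
    rw [Sym2.eq_iff] at hcon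
    rcases hcon with ⟨h1, _⟩ | ⟨h1, _⟩
    · exact hne01 h1
    · exact h02 h1
  have hd13 : s(v0, v1) ≠ s(v2, v3) := by
    intro hcon
    rw [Sym2.eq_iff] at hcon
    rcases hcon with ⟨h1, _⟩ | ⟨h1, _⟩
    · exact h02 h1
    · exact h03 h1
  have hd23 : s(v1, v2) ≠ s(v2, v3) := by
    intro hcon
    rw [Sym2.eq_iff] at hcon
    rcases hcon with ⟨h1, _⟩ | ⟨h1, _⟩
    · exact hne12 h1
    · exact h13 h1
  obtain ⟨D3, hdom3, hcard3⟩ := exists_min_dominating (subdivide T F)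
  rw [← hcard3]
  have hα : ∃ a ∈ D3, a = Sum.inl v0 ∨ a = Sum.inr e1 := by
    by_cases h : Sum.inl v0 ∈ D3
    · exact ⟨_, h, Or.inl rfl⟩
    · obtain ⟨d, hd, hadj⟩ := hdom3 _ h
      rcases subdivide_adj_cases T F hadj with ⟨d', rfl, hTd, hfd⟩ | ⟨e, rfl, hve⟩
      · exact absurd (by rw [hN0 _ hTd]; exact he1) hfd
      · rcases hmemF _ e.prop with he | he | he
        · exact ⟨_, hd, Or.inr (by congr 1; exact Subtype.ext he)⟩
        · rw [he, Sym2.mem_iff] at hve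
          rcases hve with rfl | rfl
          · exact absurd rfl hne01
          · exact absurd rfl h02
        · rw [he, Sym2.mem_iff] at hve
          rcases hve with rfl | rfl
          · exact absurd rfl h02
          · exact absurd rfl h03
  obtain ⟨a, haD, ha⟩ := hα
  have haval : ∀ r : V, r ≠ v0 → a ≠ Sum.inl r := by
    intro r hr hcon
    rcases ha with rfl | rfl
    · exact hr (Sum.inl_injective hcon).symm
    · exact nomatch hcon
  set R : Set V := {r | Sum.inl r ∈ D3 ∧ r ≠ v0 ∧ r ≠ v1 ∧ r ≠ v2} with hR
  -- facts needed in cases I and III (when x3 ∉ D3): handling of v3 and of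
  -- the other neighbors of v2, assuming also x3 ∉ D3
  have hv3fact : Sum.inr e3 ∉ D3 → v3 ∈ R ∨ ∃ m ∈ R, T.Adj v3 m := by
    intro hx3n
    by_cases h : Sum.inl v3 ∈ D3
    · refine Or.inl ⟨h, fun hc => h03 hc.symm, fun hc => h13 hc.symm, fun hc => hne23 hc.symm⟩
    obtain ⟨d, hd, hadj⟩ := hdom3 _ h
    rcases subdivide_adj_cases T F hadj with ⟨d', rfl, hTd, hfd⟩ | ⟨e, rfl, hve⟩
    · by_cases hd0 : d' = v0
      · exact absurd (hN0 v3 (hd0 ▸ hTd.symm)) (fun hc => h13 hc.symm)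
      by_cases hd1 : d' = v1
      · rcases hN1 v3 (hd1 ▸ hTd.symm) with hc | hc
        · exact absurd hc (fun hc => h03 hc.symm)
        · exact absurd hc (fun hc => hne23 hc.symm)
      by_cases hd2 : d' = v2
      · exact absurd (by rw [hd2, Sym2.eq_swap]; exact he3) hfd
      · exact Or.inr ⟨d', ⟨hd, hd0, hd1, hd2⟩, hTd⟩
    · exfalso
      rcases hmemF _ e.prop with he | he | he
      · rw [he, Sym2.mem_iff] at hve
        rcases hve with rfl | rfl
        · exact h03 rfl
        · exact h13 rfl
      · rw [he, Sym2.mem_iff] at hve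
        rcases hve with rfl | rfl
        · exact h13 rfl
        · exact hne23 rfl
      · exact hx3n (by have : e = e3 := Subtype.ext he; rwa [← this])
  -- case II (two middle elements) shared
  have caseII : ∀ β1 β2 : V ⊕ F, β1 ∈ D3 → β2 ∈ D3 → β1 ≠ β2 →
      (β1 = Sum.inl v1 ∨ β1 = Sum.inr e2 ∨ β1 = Sum.inr e3) →
      (β2 = Sum.inl v2 ∨ β2 = Sum.inr e3) →
      dominationNumber T < D3.ncard := by
    intro β1 β2 hb1D hb2D hb12 hb1 hb2
    set D : Set V := insert v1 (insert v2 R) with hD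
    have hv1D : v1 ∈ D := Set.mem_insert _ _
    have hv2D : v2 ∈ D := Set.mem_insert_of_mem _ (Set.mem_insert _ _)
    have hDdom : IsDominating T D := by
      intro v hv
      have hvne1 : v ≠ v1 := fun h => hv (h ▸ hv1D)
      have hvne2 : v ≠ v2 := fun h => hv (h ▸ hv2D)
      by_cases hv0 : v = v0
      · exact ⟨v1, hv1D, hv0 ▸ h01⟩
      by_cases hv3 : v = v3
      · exact ⟨v2, hv2D, hv3 ▸ h23.symm⟩
      have hvD3 : Sum.inl v ∉ D3 := fun h =>
        hv (Set.mem_insert_of_mem _ (Set.mem_insert_of_mem _ ⟨h, hv0, hvne1, hvne2⟩))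
      obtain ⟨d, hd, hadj⟩ := hdom3 _ hvD3
      rcases subdivide_adj_cases T F hadj with ⟨d', rfl, hTd, hfd⟩ | ⟨e, rfl, hve⟩
      · by_cases hd0 : d' = v0
        · exact absurd (hN0 v (hd0 ▸ hTd.symm)) hvne1
        by_cases hd1 : d' = v1
        · rcases hN1 v (hd1 ▸ hTd.symm) with hc | hc
          · exact absurd hc hv0
          · exact absurd hc hvne2
        by_cases hd2 : d' = v2
        · exact ⟨v2, hv2D, hd2 ▸ hTd⟩
        · exact ⟨d', Set.mem_insert_of_mem _ (Set.mem_insert_of_mem _ ⟨hd, hd0, hd1, hd2⟩), hTd⟩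
      · exfalso
        rcases hmemF _ e.prop with he | he | he <;> rw [he, Sym2.mem_iff] at hve <;>
          rcases hve with rfl | rfl
        · exact hv0 rfl
        · exact hvne1 rfl
        · exact hvne1 rfl
        · exact hvne2 rfl
        · exact hvne2 rfl
        · exact hv3 rfl
    set φ : V → V ⊕ F := fun r => if r = v1 then β1 else if r = v2 then β2 else Sum.inl r
      with hφ
    have hφval : ∀ r, r ≠ v1 → r ≠ v2 → φ r = Sum.inl r := by
      intro r h1 h2; simp [hφ, h1, h2]
    have hmaps : ∀ r ∈ D, φ r ∈ D3 := by
      intro r hr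
      rcases Set.mem_insert_iff.1 hr with rfl | hr
      · simpa [hφ] using hb1D
      rcases Set.mem_insert_iff.1 hr with rfl | hr
      · simpa [hφ, hne12.symm] using hb2D
      · rw [hφval r hr.2.2.1 hr.2.2.2]; exact hr.1
    have hb1R : ∀ r : V, r ≠ v1 → β1 ≠ Sum.inl r := by
      intro r hr hcon
      rcases hb1 with rfl | rfl | rfl
      · exact hr (Sum.inl_injective hcon).symm
      · exact nomatch hcon
      · exact nomatch hcon
    have hb2R : ∀ r : V, r ≠ v2 → β2 ≠ Sum.inl r := by
      intro r hr hcon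
      rcases hb2 with rfl | rfl
      · exact hr (Sum.inl_injective hcon).symm
      · exact nomatch hcon
    have hinj : Set.InjOn φ D := by
      intro r hr r' hr' heq
      have hcases : ∀ x ∈ D, x = v1 ∨ x = v2 ∨ (x ≠ v1 ∧ x ≠ v2) := by
        intro x hx
        by_cases hh1 : x = v1
        · exact Or.inl hh1
        by_cases hh2 : x = v2
        · exact Or.inr (Or.inl hh2)
        · exact Or.inr (Or.inr ⟨hh1, hh2⟩)
      rcases hcases r hr with rfl | rfl | ⟨hr1, hr2⟩ <;>
        rcases hcases r' hr' with rfl | rfl | ⟨hr1', hr2'⟩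
      · rfl
      · exfalso
        simp only [hφ, if_pos rfl, if_neg hne12.symm] at heq
        exact hb12 heq
      · exfalso
        rw [hφval r' hr1' hr2'] at heq
        simp only [hφ, if_pos rfl] at heq
        exact hb1R r' hr1' heq
      · exfalso
        simp only [hφ, if_pos rfl, if_neg hne12.symm] at heq
        exact hb12 heq.symm
      · rfl
      · exfalso
        rw [hφval r' hr1' hr2'] at heq
        simp only [hφ, if_neg hne12.symm, if_pos rfl] at heq
        exact hb2R r' hr2' heq
      · exfalso
        rw [hφval r hr1 hr2] at heq
        simp only [hφ, if_pos rfl] at heq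
        exact hb1R r hr1 heq.symm
      · exfalso
        rw [hφval r hr1 hr2] at heq
        simp only [hφ, if_neg hne12.symm, if_pos rfl] at heq
        exact hb2R r hr2 heq.symm
      · rw [hφval r hr1 hr2, hφval r' hr1' hr2'] at heq
        exact Sum.inl_injective heq
    refine dominationNumber_lt_ncard T hDdom φ hmaps hinj haD ?_
    rintro ⟨r, hr, hre⟩
    rcases Set.mem_insert_iff.1 hr with rfl | hr
    · simp only [hφ, if_pos rfl] at hre
      rcases hb1 with rfl | rfl | rfl <;> rcases ha with rfl | rfl
      · exact hne01 (Sum.inl_injective hre).symm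
      · exact nomatch hre
      · exact nomatch hre
      · exact hd12 (congrArg Subtype.val (Sum.inr_injective hre)).symm
      · exact nomatch hre
      · exact hd13 (congrArg Subtype.val (Sum.inr_injective hre)).symm
    rcases Set.mem_insert_iff.1 hr with rfl | hr
    · simp only [hφ, if_neg hne12.symm, if_pos rfl] at hre
      rcases hb2 with rfl | rfl <;> rcases ha with rfl | rfl
      · exact h02 (Sum.inl_injective hre).symm
      · exact nomatch hre
      · exact nomatch hre
      · exact hd13 (congrArg Subtype.val (Sum.inr_injective hre)).symm
    · rw [hφval r hr.2.2.1 hr.2.2.2] at hre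
      exact haval r hr.2.1 hre.symm
  -- cases I and III share the dominating set and injection shape:
  -- D = insert v1 R, φ sends v1 to a given element γc of D3
  have caseIIII : ∀ γc : V ⊕ F, γc ∈ D3 →
      (γc = Sum.inl v2 ∨ γc = Sum.inl v1 ∨ γc = Sum.inr e2) →
      Sum.inr e3 ∉ D3 →
      IsDominating T (insert v1 R) →
      dominationNumber T < D3.ncard := by
    intro γc hgD hg hx3n hDdom
    set D : Set V := insert v1 R with hD
    set φ : V → V ⊕ F := fun r => if r = v1 then γc else Sum.inl r with hφ
    have hgR : ∀ r : V, r ≠ v1 → r ≠ v2 → γc ≠ Sum.inl r := by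
      intro r hr1 hr2 hcon
      rcases hg with rfl | rfl | rfl
      · exact hr2 (Sum.inl_injective hcon).symm
      · exact hr1 (Sum.inl_injective hcon).symm
      · exact nomatch hcon
    have hmaps : ∀ r ∈ D, φ r ∈ D3 := by
      intro r hr
      rcases Set.mem_insert_iff.1 hr with rfl | hr
      · simpa [hφ] using hgD
      · simp only [hφ, if_neg hr.2.2.1]; exact hr.1
    have hinj : Set.InjOn φ D := by
      intro r hr r' hr' heq
      by_cases hh1 : r = v1 <;> by_cases hh1' : r' = v1
      · rw [hh1, hh1']
      · exfalso
        subst hh1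
        simp only [hφ, if_pos rfl, if_neg hh1'] at heq
        have hr'R : r' ∈ R := (Set.mem_insert_iff.1 hr').resolve_left hh1'
        exact hgR r' hh1' hr'R.2.2.2 heq
      · exfalso
        subst hh1'
        simp only [hφ, if_pos rfl, if_neg hh1] at heq
        have hrR : r ∈ R := (Set.mem_insert_iff.1 hr).resolve_left hh1
        exact hgR r hh1 hrR.2.2.2 heq.symm
      · simp only [hφ, if_neg hh1, if_neg hh1'] at heq
        exact Sum.inl_injective heq
    refine dominationNumber_lt_ncard T hDdom φ hmaps hinj haD ?_
    rintro ⟨r, hr, hre⟩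
    by_cases hh1 : r = v1
    · subst hh1
      simp only [hφ, if_pos rfl] at hre
      rcases hg with rfl | rfl | rfl <;> rcases ha with rfl | rfl
      · exact h02 (Sum.inl_injective hre).symm
      · exact nomatch hre
      · exact hne01 (Sum.inl_injective hre).symm
      · exact nomatch hre
      · exact nomatch hre
      · exact hd12 (congrArg Subtype.val (Sum.inr_injective hre)).symm
    · simp only [hφ, if_neg hh1] at hre
      have hrR : r ∈ R := (Set.mem_insert_iff.1 hr).resolve_left hh1
      exact haval r hrR.2.1 hre.symm
  by_cases h2D : Sum.inl v2 ∈ D3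
  · by_cases hmid : Sum.inl v1 ∈ D3 ∨ Sum.inr e2 ∈ D3 ∨ Sum.inr e3 ∈ D3
    · rcases hmid with hm | hm | hm
      · refine caseII _ _ hm h2D ?_ (Or.inl rfl) (Or.inl rfl)
        intro h; exact hne12 (Sum.inl_injective h)
      · refine caseII _ _ hm h2D ?_ (Or.inr (Or.inl rfl)) (Or.inl rfl)
        intro h; exact nomatch h
      · refine caseII _ _ hm h2D ?_ (Or.inr (Or.inr rfl)) (Or.inl rfl)
        intro h; exact nomatch h
    · -- CASE I
      push_neg at hmid
      obtain ⟨hv1n, hx2n, hx3n⟩ := hmid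
      refine caseIIII (Sum.inl v2) h2D (Or.inl rfl) hx3n ?_
      intro v hv
      have hvne1 : v ≠ v1 := fun h => hv (h ▸ Set.mem_insert _ _)
      by_cases hv0 : v = v0
      · exact ⟨v1, Set.mem_insert _ _, hv0 ▸ h01⟩
      by_cases hv2 : v = v2
      · exact ⟨v1, Set.mem_insert _ _, hv2 ▸ h12.symm⟩
      by_cases hv3 : v = v3
      · subst hv3
        rcases hv3fact hx3n with hm | ⟨m, hm, hadj⟩
        · exact absurd (Set.mem_insert_of_mem _ hm) hv
        · exact ⟨m, Set.mem_insert_of_mem _ hm, hadj⟩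
      have hvD3 : Sum.inl v ∉ D3 := fun h =>
        hv (Set.mem_insert_of_mem _ ⟨h, hv0, hvne1, hv2⟩)
      obtain ⟨d, hd, hadj⟩ := hdom3 _ hvD3
      rcases subdivide_adj_cases T F hadj with ⟨d', rfl, hTd, hfd⟩ | ⟨e, rfl, hve⟩
      · by_cases hd0 : d' = v0
        · exact absurd (hN0 v (hd0 ▸ hTd.symm)) hvne1
        by_cases hd1 : d' = v1
        · rcases hN1 v (hd1 ▸ hTd.symm) with hc | hc
          · exact absurd hc hv0
          · exact absurd hc hv2
        by_cases hd2 : d' = v2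
        · -- the dominator is v2 : use the leaf neighbor of v
          rw [hd2] at hTd
          obtain ⟨c, hc, hcleaf⟩ := hsupp v hTd.symm hvne1 hv3
          have hcv0 : c ≠ v0 := fun h => hvne1 (hcleaf v1 (h ▸ h01)).symm
          have hcv1 : c ≠ v1 := fun h => hv0 (hcleaf v0 (h ▸ h01.symm)).symm
          have hcv2 : c ≠ v2 := fun h => hvne1 ((hcleaf v1 (h ▸ h12.symm))).symm
          have hcv3 : c ≠ v3 := fun h => hv2 (hcleaf v2 (h ▸ h23.symm)).symm
          by_cases hcD : Sum.inl c ∈ D3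
          · exact ⟨c, Set.mem_insert_of_mem _ ⟨hcD, hcv0, hcv1, hcv2⟩, hc⟩
          · exfalso
            obtain ⟨d2, hd2, hadj2⟩ := hdom3 _ hcD
            rcases subdivide_adj_cases T F hadj2 with ⟨d2', rfl, hTd2, hfd2⟩ | ⟨e, rfl, hve⟩
            · rw [hcleaf d2' hTd2] at hd2
              exact hvD3 hd2
            · rcases hmemF _ e.prop with he | he | he <;> rw [he, Sym2.mem_iff] at hve <;>
                rcases hve with rfl | rfl
              · exact hcv0 rfl
              · exact hcv1 rfl
              · exact hcv1 rfl
              · exact hcv2 rfl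
              · exact hcv2 rfl
              · exact hcv3 rfl
        · exact ⟨d', Set.mem_insert_of_mem _ ⟨hd, hd0, hd1, hd2⟩, hTd⟩
      · exfalso
        rcases hmemF _ e.prop with he | he | he <;> rw [he, Sym2.mem_iff] at hve <;>
          rcases hve with rfl | rfl
        · exact hv0 rfl
        · exact hvne1 rfl
        · exact hvne1 rfl
        · exact hv2 rfl
        · exact hv2 rfl
        · exact hv3 rfl
  · have hβ : Sum.inr e2 ∈ D3 ∨ Sum.inl v1 ∈ D3 := by
      by_cases h : Sum.inr e2 ∈ D3
      · exact Or.inl h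
      obtain ⟨d, hd, hadj⟩ := hdom3 _ h
      cases d with
      | inl u =>
        have := (subdivide_adj_inl_inr T F).1 hadj.symm
        rw [Sym2.mem_iff] at this
        rcases this with rfl | rfl
        · exact Or.inr hd
        · exact absurd hd h2D
      | inr e' => exact absurd hadj (subdivide_adj_inr_inr T F)
    by_cases hx3 : Sum.inr e3 ∈ D3
    · rcases hβ with hm | hm
      · refine caseII _ _ hm hx3 ?_ (Or.inr (Or.inl rfl)) (Or.inr rfl)
        intro h
        exact hd23 (congrArg Subtype.val (Sum.inr_injective h))
      · refine caseII _ _ hm hx3 ?_ (Or.inl rfl) (Or.inr rfl)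
        intro h; exact nomatch h
    · -- CASE III
      obtain ⟨β, hbD, hb⟩ : ∃ b ∈ D3, b = Sum.inl v1 ∨ b = Sum.inr e2 := by
        rcases hβ with hm | hm
        · exact ⟨_, hm, Or.inr rfl⟩
        · exact ⟨_, hm, Or.inl rfl⟩
      refine caseIIII β hbD (Or.inr hb) hx3 ?_
      intro v hv
      have hvne1 : v ≠ v1 := fun h => hv (h ▸ Set.mem_insert _ _)
      by_cases hv0 : v = v0
      · exact ⟨v1, Set.mem_insert _ _, hv0 ▸ h01⟩
      by_cases hv2 : v = v2
      · exact ⟨v1, Set.mem_insert _ _, hv2 ▸ h12.symm⟩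
      by_cases hv3 : v = v3
      · subst hv3
        rcases hv3fact hx3 with hm | ⟨m, hm, hadj⟩
        · exact absurd (Set.mem_insert_of_mem _ hm) hv
        · exact ⟨m, Set.mem_insert_of_mem _ hm, hadj⟩
      have hvD3 : Sum.inl v ∉ D3 := fun h =>
        hv (Set.mem_insert_of_mem _ ⟨h, hv0, hvne1, hv2⟩)
      obtain ⟨d, hd, hadj⟩ := hdom3 _ hvD3
      rcases subdivide_adj_cases T F hadj with ⟨d', rfl, hTd, hfd⟩ | ⟨e, rfl, hve⟩
      · by_cases hd0 : d' = v0
        · exact absurd (hN0 v (hd0 ▸ hTd.symm)) hvne1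
        by_cases hd1 : d' = v1
        · rcases hN1 v (hd1 ▸ hTd.symm) with hc | hc
          · exact absurd hc hv0
          · exact absurd hc hv2
        by_cases hd2 : d' = v2
        · exact absurd hd (hd2 ▸ h2D)
        · exact ⟨d', Set.mem_insert_of_mem _ ⟨hd, hd0, hd1, hd2⟩, hTd⟩
      · exfalso
        rcases hmemF _ e.prop with he | he | he <;> rw [he, Sym2.mem_iff] at hve <;>
          rcases hve with rfl | rfl
        · exact hv0 rfl
        · exact hvne1 rfl
        · exact hvne1 rfl
        · exact hv2 rfl
        · exact hv2 rfl
        · exact hv3 rfl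

end Claims

section StructAux
variable {V : Type u} {T : SimpleGraph V}

/-- In a path starting at `a`, any edge of the path containing `a` goes to the
second vertex. -/
lemma edge_start {a c b z : V} (h : T.Adj a c) {Q : T.Walk c b}
    (hP : (Walk.cons h Q).IsPath) (he : s(a, z) ∈ (Walk.cons h Q).edges) : z = c := by
  rw [Walk.edges_cons, List.mem_cons] at he
  rcases he with he | he
  · rw [Sym2.eq_iff] at he
    rcases he with ⟨-, h2⟩ | ⟨h1, -⟩
    · exact h2
    · exact absurd h1 h.ne
  · exfalso
    have : a ∈ Q.support := Q.fst_mem_support_of_mem_edges he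
    exact ((Walk.cons_isPath_iff h Q).1 hP).2 this

/-- In an acyclic graph, a neighbor `z ≠ c` of the start of a path `a-c-…`
cannot lie on the path. -/
lemma start_nbr_not_mem (hacyc : T.IsAcyclic) {a c b z : V} (h : T.Adj a c)
    {Q : T.Walk c b} (hP : (Walk.cons h Q).IsPath) (hz : T.Adj a z) (hzc : z ≠ c) :
    z ∉ (Walk.cons h Q).support := by
  classical
  intro hzs
  have hnotedge : s(a, z) ∉ (Walk.cons h Q).edges := fun he => hzc (edge_start h hP he)
  have hq : ((Walk.cons h Q).takeUntil z hzs).IsPath := hP.takeUntil hzs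
  have hcyc : (Walk.cons hz.symm ((Walk.cons h Q).takeUntil z hzs)).IsCycle := by
    rw [Walk.cons_isCycle_iff]
    refine ⟨hq, fun hc => hnotedge ?_⟩
    have := (Walk.cons h Q).edges_takeUntil_subset hzs hc
    rwa [Sym2.eq_swap] at this
  exact hacyc _ hcyc

/-- A neighbor `y ≠ u` of a vertex `z` adjacent to the start `u` of a path
`Q` (with `z` off the path) cannot lie on the path. -/
lemma nbr_nbr_not_mem (hacyc : T.IsAcyclic) {u b z y : V} {Q : T.Walk u b}
    (hQ : Q.IsPath) (hz : T.Adj u z) (hzs : z ∉ Q.support) (hy : T.Adj z y)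
    (hyu : y ≠ u) : y ∉ Q.support := by
  classical
  intro hyQ
  have hq : (Q.takeUntil y hyQ).IsPath := hQ.takeUntil hyQ
  have hzq : z ∉ (Q.takeUntil y hyQ).support :=
    fun hc => hzs (Q.support_takeUntil_subset hyQ hc)
  have hc1 : (Walk.cons hz.symm (Q.takeUntil y hyQ)).IsPath :=
    (Walk.cons_isPath_iff _ _).2 ⟨hq, hzq⟩
  have hcyc : (Walk.cons hy.symm (Walk.cons hz.symm (Q.takeUntil y hyQ))).IsCycle := by
    rw [Walk.cons_isCycle_iff]
    refine ⟨hc1, ?_⟩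
    rw [Walk.edges_cons, List.mem_cons]
    rintro (hc | hc)
    · rw [Sym2.eq_iff] at hc
      rcases hc with ⟨h1, h2⟩ | ⟨h1, h2⟩
      · exact hy.ne' h1
      · exact hyu h1
    · exact hzq ((Q.takeUntil y hyQ).snd_mem_support_of_mem_edges hc)
  exact hacyc _ hcyc

section MaxPath
/-- Two-step extension lemma: if extending a path by two exceeds the maximum,
then any neighbor `z` of the start lying off the path is a leaf. -/
lemma two_ext (hacyc : T.IsAcyclic) {N : ℕ}
    (hmax : ∀ {x y : V} (q : T.Walk x y), q.IsPath → q.length ≤ N)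
    {u b z : V} {Q : T.Walk u b} (hQ : Q.IsPath)
    (hbig : N < Q.length + 2) (hz : T.Adj u z) (hzs : z ∉ Q.support) :
    ∀ y, T.Adj z y → y = u := by
  intro y hy
  by_contra hyu
  have hyQ : y ∉ Q.support := nbr_nbr_not_mem hacyc hQ hz hzs hy hyu
  have h1 : (Walk.cons hz.symm Q).IsPath := (Walk.cons_isPath_iff _ _).2 ⟨hQ, hzs⟩
  have h2 : (Walk.cons hy.symm (Walk.cons hz.symm Q)).IsPath := by
    refine (Walk.cons_isPath_iff _ _).2 ⟨h1, ?_⟩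
    rw [Walk.support_cons, List.mem_cons]
    rintro (rfl | hc)
    · exact hy.ne' rfl
    · exact hyQ hc
  have := hmax _ h2
  simp only [Walk.length_cons] at this
  omega

/-- Three-step extension lemma. -/
lemma three_ext (hacyc : T.IsAcyclic) {N : ℕ}
    (hmax : ∀ {x y : V} (q : T.Walk x y), q.IsPath → q.length ≤ N)
    {u b z y : V} {Q : T.Walk u b} (hQ : Q.IsPath)
    (hbig : N < Q.length + 3) (hz : T.Adj u z) (hzs : z ∉ Q.support)
    (hy : T.Adj z y) (hyu : y ≠ u) :
    ∀ e, T.Adj y e → e = z := by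
  have hyQ : y ∉ Q.support := nbr_nbr_not_mem hacyc hQ hz hzs hy hyu
  have h1 : (Walk.cons hz.symm Q).IsPath := (Walk.cons_isPath_iff _ _).2 ⟨hQ, hzs⟩
  have hys : y ∉ (Walk.cons hz.symm Q).support := by
    rw [Walk.support_cons, List.mem_cons]
    rintro (rfl | hc)
    · exact hy.ne' rfl
    · exact hyQ hc
  refine two_ext hacyc hmax h1 ?_ hy hys
  simp only [Walk.length_cons]
  omega

/-- For a *maximal* path, every neighbor of the start is the second vertex. -/
lemma nbr_start (hacyc : T.IsAcyclic) {N : ℕ}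
    (hmax : ∀ {x y : V} (q : T.Walk x y), q.IsPath → q.length ≤ N)
    {a c b z : V} (h : T.Adj a c) {Q : T.Walk c b}
    (hP : (Walk.cons h Q).IsPath) (hlen : (Walk.cons h Q).length = N)
    (hz : T.Adj a z) : z = c := by
  by_contra hzc
  have hzs : z ∉ (Walk.cons h Q).support := start_nbr_not_mem hacyc h hP hz hzc
  have h1 : (Walk.cons hz.symm (Walk.cons h Q)).IsPath :=
    (Walk.cons_isPath_iff _ _).2 ⟨hP, hzs⟩
  have := hmax _ h1
  simp only [Walk.length_cons] at this hlen
  omega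

end MaxPath
lemma exists_config [Fintype V] (hT : T.IsTree) (h3 : 3 ≤ Fintype.card V) :
    (∃ v0 v1 l0, T.Adj v0 v1 ∧ T.Adj v1 l0 ∧ v0 ≠ l0 ∧
      (∀ z, T.Adj v0 z → z = v1) ∧ (∀ z, T.Adj l0 z → z = v1)) ∨
    (∃ v0 v1 v2 l, T.Adj v0 v1 ∧ T.Adj v1 v2 ∧ T.Adj v2 l ∧ l ≠ v1 ∧ v0 ≠ v2 ∧
      (∀ z, T.Adj v0 z → z = v1) ∧ (∀ z, T.Adj l z → z = v2)) ∨
    (∃ v0 v1 v2 v3, T.Adj v0 v1 ∧ T.Adj v1 v2 ∧ T.Adj v2 v3 ∧ v0 ≠ v2 ∧ v0 ≠ v3 ∧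
      v1 ≠ v3 ∧ (∀ z, T.Adj v0 z → z = v1) ∧ (∀ z, T.Adj v1 z → z = v0 ∨ z = v2) ∧
      (∀ w, T.Adj v2 w → w ≠ v1 → w ≠ v3 →
        ∃ c, T.Adj w c ∧ ∀ z, T.Adj c z → z = w)) := by
  classical
  have hacyc : T.IsAcyclic := hT.IsAcyclic
  have hconn : T.Connected := hT.isConnected
  set S : Set ℕ := {n | ∃ (x y : V) (q : T.Walk x y), q.IsPath ∧ q.length = n} with hS
  have hbdd : BddAbove S := by
    refine ⟨Fintype.card V, ?_⟩
    rintro n ⟨x, y, q, hq, rfl⟩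
    exact le_of_lt hq.length_lt
  have hvne : Nonempty V := Fintype.card_pos_iff.mp (by omega)
  obtain ⟨v⟩ := hvne
  have hSne : S.Nonempty := ⟨0, v, v, Walk.nil, Walk.IsPath.nil, rfl⟩
  set N := sSup S with hN
  have hmemN : N ∈ S := Nat.sSup_mem hSne hbdd
  have hmax : ∀ {x y : V} (q : T.Walk x y), q.IsPath → q.length ≤ N :=
    fun q hq => le_csSup hbdd ⟨_, _, q, hq, rfl⟩
  have hN2 : 2 ≤ N := by
    by_contra hc
    push_neg at hc
    obtain ⟨a, b, hab⟩ := Fintype.exists_pair_of_one_lt_card (α := V) (by omega)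
    have h2 : ∃ c, c ≠ a ∧ c ≠ b := by
      by_contra h2
      push_neg at h2
      have hsub : (Finset.univ : Finset V) ⊆ {a, b} := by
        intro x _
        by_cases hx : x = a
        · simp [hx]
        · simp [h2 x hx]
      have hcard := Finset.card_le_card hsub
      have : ({a, b} : Finset V).card ≤ 2 :=
        (Finset.card_insert_le _ _).trans (by simp)
      rw [Finset.card_univ] at hcard
      omega
    obtain ⟨c, hca, hcb⟩ := h2
    have hadj : ∀ x y : V, x ≠ y → T.Adj x y := by
      intro x y hxy
      obtain ⟨w⟩ := hconn.preconnected x y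
      have hle := hmax w.toPath.1 w.toPath.2
      have hne0 : w.toPath.1.length ≠ 0 := fun h0 => hxy (Walk.eq_of_length_eq_zero h0)
      have h1 : w.toPath.1.length = 1 := by omega
      exact Walk.adj_of_length_eq_one h1
    have hP : (Walk.cons (hadj a c (Ne.symm hca)) (Walk.cons (hadj c b hcb)
        Walk.nil)).IsPath := by
      rw [Walk.cons_isPath_iff, Walk.cons_isPath_iff]
      refine ⟨⟨Walk.IsPath.nil, by simp [hcb]⟩, ?_⟩
      simp [Walk.support_cons, Walk.support_nil]
      exact ⟨Ne.symm hca, hab⟩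
    have := hmax _ hP
    simp only [Walk.length_cons, Walk.length_nil] at this
    omega
  obtain ⟨x, y, p, hp, hlen⟩ := hmemN
  cases p with
  | nil =>
    simp only [Walk.length_nil] at hlen
    omega
  | cons h01 p1 =>
    rename_i v1
    cases p1 with
    | nil =>
      simp only [Walk.length_cons, Walk.length_nil] at hlen
      omega
    | cons h12 p2 =>
      rename_i v2
      -- basic decompositions
      have hp1 : (Walk.cons h12 p2).IsPath := hp.of_cons
      have hv0n : x ∉ (Walk.cons h12 p2).support := ((Walk.cons_isPath_iff _ _).1 hp).2
      have hp2 : p2.IsPath := hp1.of_cons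
      have hv1n : v1 ∉ p2.support := ((Walk.cons_isPath_iff _ _).1 hp1).2
      have hv2mem : v2 ∈ (Walk.cons h12 p2).support := by
        rw [Walk.support_cons]
        exact List.mem_cons_of_mem _ p2.start_mem_support
      have h02 : x ≠ v2 := fun h => hv0n (h ▸ hv2mem)
      have hN0 : ∀ z, T.Adj x z → z = v1 := fun z hz => nbr_start hacyc hmax h01 hp hlen hz
      by_cases hii : ∃ l0, T.Adj v1 l0 ∧ l0 ≠ x ∧ ∀ z2, T.Adj l0 z2 → z2 = v1
      · obtain ⟨l0, hl, hlx, hNl⟩ := hii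
        exact Or.inl ⟨x, v1, l0, h01, hl, Ne.symm hlx, hN0, hNl⟩
      · have hN1 : ∀ z, T.Adj v1 z → z = x ∨ z = v2 := by
          intro z hz
          by_cases hz0 : z = x
          · exact Or.inl hz0
          by_cases hz2 : z = v2
          · exact Or.inr hz2
          exfalso
          have hzn : z ∉ (Walk.cons h12 p2).support :=
            start_nbr_not_mem hacyc h12 hp1 hz hz2
          have hbig : N < (Walk.cons h12 p2).length + 2 := by
            simp only [Walk.length_cons] at hlen ⊢
            omega
          have hleaf := two_ext hacyc hmax hp1 hbig hz hzn
          exact hii ⟨z, hz, hz0, hleaf⟩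
        cases p2 with
        | nil =>
          -- N = 2 : the endpoint is a second leaf of v1
          have hrevp : (Walk.cons h12.symm (Walk.cons h01.symm Walk.nil)).IsPath := by
            rw [Walk.cons_isPath_iff, Walk.cons_isPath_iff]
            refine ⟨⟨Walk.IsPath.nil, by simp [h01.ne']⟩, ?_⟩
            simp only [Walk.support_cons, Walk.support_nil, List.mem_cons,
              List.mem_singleton, List.not_mem_nil, or_false]
            push_neg
            exact ⟨h12.ne', Ne.symm h02⟩
          have hrevlen : (Walk.cons h12.symm (Walk.cons h01.symm Walk.nil)).length = N := by
            simp only [Walk.length_cons, Walk.length_nil] at hlen ⊢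
            omega
          have hNl : ∀ z, T.Adj y z → z = v1 :=
            fun z hz => nbr_start hacyc hmax h12.symm hrevp hrevlen hz
          exact Or.inl ⟨x, v1, y, h01, h12, h02, hN0, hNl⟩
        | cons h23 p3 =>
          rename_i v3
          have hv3mem2 : v3 ∈ (Walk.cons h23 p3).support := by
            rw [Walk.support_cons]
            exact List.mem_cons_of_mem _ p3.start_mem_support
          have h03 : x ≠ v3 := by
            intro h
            refine hv0n ?_
            rw [Walk.support_cons]
            exact List.mem_cons_of_mem _ (h ▸ hv3mem2)
          have h13 : v1 ≠ v3 := fun h => hv1n (h ▸ hv3mem2)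
          by_cases hiii : ∃ l, T.Adj v2 l ∧ l ≠ v1 ∧ ∀ z2, T.Adj l z2 → z2 = v2
          · obtain ⟨l, hl, hlv1, hNl⟩ := hiii
            exact Or.inr (Or.inl ⟨x, v1, v2, l, h01, h12, hl, hlv1, h02, hN0, hNl⟩)
          · refine Or.inr (Or.inr ⟨x, v1, v2, v3, h01, h12, h23, h02, h03, h13,
              hN0, hN1, ?_⟩)
            intro w hw hw1 hw3
            have hwnl : ¬(∀ z2, T.Adj w z2 → z2 = v2) := fun hleaf =>
              hiii ⟨w, hw, hw1, hleaf⟩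
            push_neg at hwnl
            obtain ⟨c, hc, hcne⟩ := hwnl
            have hwn : w ∉ (Walk.cons h23 p3).support :=
              start_nbr_not_mem hacyc h23 hp2 hw hw3
            have hbig : N < (Walk.cons h23 p3).length + 3 := by
              simp only [Walk.length_cons] at hlen ⊢
              omega
            exact ⟨c, hc, three_ext hacyc hmax hp2 hbig hw hwn hc hcne⟩

end StructAux
end AuxProof

/-- The domination subdivision number of every finite tree with at least
three vertices satisfies `1 ≤ sd(T) ≤ 3`. -/
theorem one_le_sd_and_sd_le_three {V : Type u} [Fintype V]
    (T : SimpleGraph V) (hT : T.IsTree) (h3 : 3 ≤ Fintype.card V) :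
    1 ≤ sd T ∧ sd T ≤ 3 := by
  classical
  have hconfig := exists_config hT h3
  have hmem : (∃ F : Set (Sym2 V), F ⊆ T.edgeSet ∧ F.ncard = 1 ∧
        dominationNumber T < dominationNumber (subdivide T F)) ∨
      (∃ F : Set (Sym2 V), F ⊆ T.edgeSet ∧ F.ncard = 3 ∧
        dominationNumber T < dominationNumber (subdivide T F)) := by
    rcases hconfig with ⟨v0, v1, l0, h01, hl, hne, hN0, hNl⟩ |
      ⟨v0, v1, v2, l, h01, h12, hl2, hlv1, h02, hN0, hNl⟩ |
      ⟨v0, v1, v2, v3, h01, h12, h23, h02, h03, h13, hN0, hN1, hsupp⟩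
    · refine Or.inl ⟨{s(v0, v1)}, ?_, Set.ncard_singleton _,
        claim_two_leaves h01 hl hne hN0 hNl⟩
      rw [Set.singleton_subset_iff]
      exact h01
    · have hne01 : v0 ≠ v1 := h01.ne
      have hne12 : v1 ≠ v2 := h12.ne
      have hlv0 : l ≠ v0 := by
        intro h
        exact hne12 (hN0 v2 (by rw [← h]; exact hl2.symm)).symm
      have hd12 : s(v0, v1) ≠ s(v1, v2) := by
        intro hcon
        rw [Sym2.eq_iff] at hcon
        rcases hcon with ⟨h1, _⟩ | ⟨h1, _⟩
        · exact hne01 h1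
        · exact h02 h1
      have hd13 : s(v0, v1) ≠ s(v2, l) := by
        intro hcon
        rw [Sym2.eq_iff] at hcon
        rcases hcon with ⟨h1, _⟩ | ⟨h1, _⟩
        · exact h02 h1
        · exact hlv0 h1.symm
      have hd23 : s(v1, v2) ≠ s(v2, l) := by
        intro hcon
        rw [Sym2.eq_iff] at hcon
        rcases hcon with ⟨h1, _⟩ | ⟨h1, _⟩
        · exact hne12 h1
        · exact hlv1 h1.symm
      refine Or.inr ⟨{s(v0, v1), s(v1, v2), s(v2, l)}, ?_, ?_,
        claim_leaf_at_v2 h01 h12 hl2 hlv1 h02 hN0 hNl⟩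
      · intro e he
        simp only [Set.mem_insert_iff, Set.mem_singleton_iff] at he
        rcases he with rfl | rfl | rfl
        · exact h01
        · exact h12
        · exact hl2
      · rw [Set.ncard_insert_of_notMem (by simp [hd12, hd13]) (Set.toFinite _),
          Set.ncard_insert_of_notMem (by simp [hd23]) (Set.toFinite _),
          Set.ncard_singleton]
    · have hne01 : v0 ≠ v1 := h01.ne
      have hne12 : v1 ≠ v2 := h12.ne
      have hd12 : s(v0, v1) ≠ s(v1, v2) := by
        intro hcon
        rw [Sym2.eq_iff] at hcon
        rcases hcon with ⟨h1, _⟩ | ⟨h1, _⟩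
        · exact hne01 h1
        · exact h02 h1
      have hd13 : s(v0, v1) ≠ s(v2, v3) := by
        intro hcon
        rw [Sym2.eq_iff] at hcon
        rcases hcon with ⟨h1, _⟩ | ⟨h1, _⟩
        · exact h02 h1
        · exact h03 h1
      have hd23 : s(v1, v2) ≠ s(v2, v3) := by
        intro hcon
        rw [Sym2.eq_iff] at hcon
        rcases hcon with ⟨h1, _⟩ | ⟨h1, _⟩
        · exact hne12 h1
        · exact h13 h1
      refine Or.inr ⟨{s(v0, v1), s(v1, v2), s(v2, v3)}, ?_, ?_,
        claim_no_leaf_at_v2 h01 h12 h23 h02 h03 h13 hN0 hN1 hsupp⟩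
      · intro e he
        simp only [Set.mem_insert_iff, Set.mem_singleton_iff] at he
        rcases he with rfl | rfl | rfl
        · exact h01
        · exact h12
        · exact h23
      · rw [Set.ncard_insert_of_notMem (by simp [hd12, hd13]) (Set.toFinite _),
          Set.ncard_insert_of_notMem (by simp [hd23]) (Set.toFinite _),
          Set.ncard_singleton]
  have hSne : {k : ℕ | ∃ F : Set (Sym2 V), F ⊆ T.edgeSet ∧ F.ncard = k ∧
      dominationNumber T < dominationNumber (subdivide T F)}.Nonempty := by
    rcases hmem with ⟨F, h1, h2, h3'⟩ | ⟨F, h1, h2, h3'⟩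
    · exact ⟨1, F, h1, h2, h3'⟩
    · exact ⟨3, F, h1, h2, h3'⟩
  have h0notmem : (0 : ℕ) ∉ {k : ℕ | ∃ F : Set (Sym2 V), F ⊆ T.edgeSet ∧ F.ncard = k ∧
      dominationNumber T < dominationNumber (subdivide T F)} := by
    rintro ⟨F, hFsub, hF0, hlt⟩
    have hFe : F = ∅ := (Set.ncard_eq_zero (Set.toFinite F)).mp hF0
    subst hFe
    obtain ⟨D, hD, hcard⟩ := exists_min_dominating T
    have hdom : IsDominating (subdivide T (∅ : Set (Sym2 V))) (Sum.inl '' D) := by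
      intro w hw
      cases w with
      | inr e => exact absurd e.prop (Set.notMem_empty _)
      | inl u =>
        have hu : u ∉ D := fun h => hw ⟨u, h, rfl⟩
        obtain ⟨d, hd, hadj⟩ := hD u hu
        exact ⟨Sum.inl d, ⟨d, hd, rfl⟩,
          (subdivide_adj_inl_inl T ∅).2 ⟨hadj, Set.notMem_empty _⟩⟩
    have hle := dominationNumber_le (subdivide T (∅ : Set (Sym2 V))) hdom
    have himg : (Sum.inl '' D : Set (V ⊕ (∅ : Set (Sym2 V)))).ncard = D.ncard :=
      Set.ncard_image_of_injective D Sum.inl_injective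
    rw [himg, hcard] at hle
    omega
  have hsdmem : sd T ∈ {k : ℕ | ∃ F : Set (Sym2 V), F ⊆ T.edgeSet ∧ F.ncard = k ∧
      dominationNumber T < dominationNumber (subdivide T F)} := Nat.sInf_mem hSne
  constructor
  · rcases Nat.eq_zero_or_pos (sd T) with h | h
    · exact absurd (h ▸ hsdmem) h0notmem
    · exact h
  · rcases hmem with ⟨F, h1, h2, h3'⟩ | ⟨F, h1, h2, h3'⟩
    · exact le_trans (Nat.sInf_le ⟨F, h1, h2, h3'⟩) (by omega)
    · exact Nat.sInf_le ⟨F, h1, h2, h3'⟩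


end GenCorona
end
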